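/- arXiv:1608.07247 — 2 statements merged into one kernel-verified Lean document; each statement's English description precedes it below -/
import Mathlib

section
/- Let k ≥ 2 be an integer such that k+1 is divisible by neither 3 nor 4, and let L be a real number such that a_k(n)/n converges to L as n → ∞. Then L ≤ (k(k+1)+1)/(4k). -/
open Finset Filter

/-- The four directions: horizontal, vertical and the two diagonals. -/
def Dirs : Finset (ℤ × ℤ) := {(1, 0), (0, 1), (1, 1), (1, -1)}

/-- `p` is the start of a pattern of length `k` of `S` in direction `d`:
`p + t • d ∈ S` for all `0 ≤ t < k`, while `p - d ∉ S` and `p + k • d ∉ S`. -/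
def IsPatternStart (S : Finset (ℤ × ℤ)) (k : ℕ) (d p : ℤ × ℤ) : Prop :=
  (∀ t : ℕ, t < k → p + (t : ℤ) • d ∈ S) ∧ p - d ∉ S ∧ p + (k : ℤ) • d ∉ S

/-- `P_k(S)`: the number of pairs `(d, p)` with `d ∈ Dirs` and `p` the start of a
pattern of length `k` of `S` in direction `d`. -/
noncomputable def patternCount (S : Finset (ℤ × ℤ)) (k : ℕ) : ℕ :=
  Set.ncard {dp : (ℤ × ℤ) × (ℤ × ℤ) | dp.1 ∈ Dirs ∧ IsPatternStart S k dp.1 dp.2}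

/-- `a_k(n)`: the minimum cardinality of a finite `S ⊆ ℤ × ℤ` with exactly `n`
patterns of length `k`. -/
noncomputable def minPoints (k n : ℕ) : ℕ :=
  sInf {c | ∃ S : Finset (ℤ × ℤ), patternCount S k = n ∧ S.card = c}

namespace Stmt15Aux

lemma eq_zero_of_dvd_of_bounds {n c : ℤ} (hn : 0 < n) (h : n ∣ c)
    (h1 : -n < c) (h2 : c < n) : c = 0 := by
  obtain ⟨t, rfl⟩ := h
  rcases lt_trichotomy t 0 with ht | ht | ht
  · exfalso; nlinarith
  · simp [ht]
  · exfalso; nlinarith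

lemma emod_sub_dvd (n a : ℤ) : n ∣ a % n - a :=
  ⟨-(a / n), by rw [Int.emod_def]; ring⟩

lemma dvd_emod_left_iff {n a b : ℤ} : n ∣ a % n - b ↔ n ∣ a - b := by
  constructor <;> intro h
  · have h2 := emod_sub_dvd n a
    have := dvd_sub h h2
    simpa using this
  · have h2 := emod_sub_dvd n a
    have := dvd_add h h2
    have h3 : a - b + (a % n - a) = a % n - b := by ring
    rwa [h3] at this

lemma dvd_emod_right_iff {n a b : ℤ} : n ∣ a - b % n ↔ n ∣ a - b := by
  constructor <;> intro h
  · have h2 := emod_sub_dvd n b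
    have := dvd_add h h2
    have h3 : a - b % n + (b % n - b) = a - b := by ring
    rwa [h3] at this
  · have h2 := emod_sub_dvd n b
    have := dvd_sub h h2
    have h3 : a - b - (b % n - b) = a - b % n := by ring
    rwa [h3] at this

lemma not_dvd_of_two_dvd {n c : ℤ} (h2 : (2:ℤ) ∣ n) (hc : ¬ (2:ℤ) ∣ c) : ¬ n ∣ c :=
  fun h => hc (h2.trans h)

/-- Abstract interface : a "near-queens" residue configuration mod `n`. -/
structure QConf (n : ℤ) where
  σ : ℤ → ℤ
  Gm : Finset ℤ
  Gp : Finset ℤ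
  σ_nonneg : ∀ r, 0 ≤ r → r < n → 0 ≤ σ r
  σ_lt : ∀ r, 0 ≤ r → r < n → σ r < n
  inj : ∀ r, 0 ≤ r → r < n → ∀ r', 0 ≤ r' → r' < n → n ∣ σ r' - σ r → r' = r
  gm_sub : ∀ r ∈ Gm, 0 ≤ r ∧ r < n
  gp_sub : ∀ r ∈ Gp, 0 ≤ r ∧ r < n
  diag : ∀ r ∈ Gm, ∀ r', 0 ≤ r' → r' < n → n ∣ (σ r' - r') - (σ r - r) → r' = r
  adiag : ∀ r ∈ Gp, ∀ r', 0 ≤ r' → r' < n → n ∣ (σ r' + r') - (σ r + r) → r' = r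
  cards : 2 * n - 4 ≤ (Gm.card : ℤ) + (Gp.card : ℤ)

variable (n : ℤ) (Q : QConf n) (m : ℤ)

/-- The big box with periodic holes. -/
noncomputable def SBox : Finset (ℤ × ℤ) :=
  (Finset.Ico 0 (n*m) ×ˢ Finset.Ico 0 (n*m)).filter fun p => ¬ (n ∣ p.1 - Q.σ (p.2 % n))

lemma mem_SBox {p : ℤ × ℤ} :
    p ∈ SBox n Q m ↔ (0 ≤ p.1 ∧ p.1 < n*m) ∧ (0 ≤ p.2 ∧ p.2 < n*m)
      ∧ ¬ (n ∣ p.1 - Q.σ (p.2 % n)) := by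
  simp [SBox, Finset.mem_filter, Finset.mem_product, Finset.mem_Ico, and_assoc]



lemma pair_sub (a b x y : ℤ) : (a, b) - ((x:ℤ), (y:ℤ)) = (a - x, b - y) := rfl

lemma add_smul_horiz (a b c : ℤ) : (a, b) + c • ((1:ℤ), (0:ℤ)) = (a + c, b) := by
  simp [Prod.ext_iff]

lemma add_smul_vert (a b c : ℤ) : (a, b) + c • ((0:ℤ), (1:ℤ)) = (a, b + c) := by
  simp [Prod.ext_iff]

lemma add_smul_diag (a b c : ℤ) : (a, b) + c • ((1:ℤ), (1:ℤ)) = (a + c, b + c) := by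
  simp [Prod.ext_iff]

lemma add_smul_adiag (a b c : ℤ) : (a, b) + c • ((1:ℤ), (-1:ℤ)) = (a + c, b - c) := by
  simp [Prod.ext_iff]; ring

lemma isPatternStart_horiz (hn : 3 ≤ n) (hm : 2 ≤ m) {k : ℕ} (hk : (k:ℤ) = n - 1)
    {y s : ℤ} (hy0 : 0 ≤ y) (hy : y < n*m) (hs0 : 0 ≤ s) (hs : s < m - 1) :
    IsPatternStart (SBox n Q m) k (1,0) (Q.σ (y % n) + n*s + 1, y) := by
  have hn0 : (0:ℤ) < n := by omega
  set r := y % n with hrdef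
  have hr0 : 0 ≤ r := Int.emod_nonneg y hn0.ne'
  have hrn : r < n := Int.emod_lt_of_pos y hn0
  have hσ0 := Q.σ_nonneg r hr0 hrn
  have hσn := Q.σ_lt r hr0 hrn
  have hns0 : 0 ≤ n * s := mul_nonneg hn0.le hs0
  have hns : n * s ≤ n * (m - 2) := mul_le_mul_of_nonneg_left (by omega) hn0.le
  refine ⟨?_, ?_, ?_⟩
  · intro t ht
    have ht0 : (0:ℤ) ≤ (t:ℤ) := Int.natCast_nonneg t
    have htk : (t:ℤ) < (k:ℤ) := by exact_mod_cast ht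
    rw [hk] at htk
    rw [add_smul_horiz, mem_SBox]
    dsimp only
    rw [← hrdef]
    refine ⟨⟨by linarith, by linarith⟩, ⟨by linarith, by linarith⟩, ?_⟩
    intro hdvd
    obtain ⟨c₁, hc₁⟩ := hdvd
    have hd : n ∣ 1 + (t:ℤ) := ⟨c₁ - s, by linarith⟩
    have := eq_zero_of_dvd_of_bounds hn0 hd (by linarith) (by linarith)
    linarith
  · rw [pair_sub, mem_SBox]
    dsimp only
    rintro ⟨-, -, hhole⟩
    rw [show y - (0:ℤ) = y by ring, ← hrdef] at hhole
    exact hhole ⟨s, by ring⟩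
  · rw [add_smul_horiz, mem_SBox]
    dsimp only
    rw [← hrdef, hk]
    rintro ⟨-, -, hhole⟩
    exact hhole ⟨s + 1, by ring⟩

lemma isPatternStart_vert (hn : 3 ≤ n) (hm : 2 ≤ m) {k : ℕ} (hk : (k:ℤ) = n - 1)
    {r s u : ℤ} (hr0 : 0 ≤ r) (hrn : r < n) (hs0 : 0 ≤ s) (hs : s < m)
    (hu0 : 0 ≤ u) (hu : u < m - 1) :
    IsPatternStart (SBox n Q m) k (0,1) (Q.σ r + n*s, r + n*u + 1) := by
  have hn0 : (0:ℤ) < n := by omega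
  have hσ0 := Q.σ_nonneg r hr0 hrn
  have hσn := Q.σ_lt r hr0 hrn
  have hns0 : 0 ≤ n * s := mul_nonneg hn0.le hs0
  have hnu0 : 0 ≤ n * u := mul_nonneg hn0.le hu0
  have hns : n * s ≤ n * (m - 1) := mul_le_mul_of_nonneg_left (by omega) hn0.le
  have hnu : n * u ≤ n * (m - 2) := mul_le_mul_of_nonneg_left (by omega) hn0.le
  have hys : ∀ v : ℤ, (r + n * v) % n = r := fun v => by
    rw [Int.add_mul_emod_self_left, Int.emod_eq_of_lt hr0 hrn]
  refine ⟨?_, ?_, ?_⟩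
  · intro t ht
    have ht0 : (0:ℤ) ≤ (t:ℤ) := Int.natCast_nonneg t
    have htk : (t:ℤ) < (k:ℤ) := by exact_mod_cast ht
    rw [hk] at htk
    rw [add_smul_vert, mem_SBox]
    dsimp only
    refine ⟨⟨by linarith, by linarith⟩, ⟨by linarith, by linarith⟩, ?_⟩
    intro hdvd
    set Y := r + n*u + 1 + (t:ℤ) with hY
    set r' := Y % n with hr'def
    have hr'0 : 0 ≤ r' := Int.emod_nonneg Y hn0.ne'
    have hr'n : r' < n := Int.emod_lt_of_pos Y hn0
    obtain ⟨c₂, hc₂⟩ : n ∣ r' - Y := emod_sub_dvd n Y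
    obtain ⟨c₁, hc₁⟩ := hdvd
    have hkey : n ∣ Q.σ r' - Q.σ r := ⟨s - c₁, by linarith⟩
    have heq := Q.inj r hr0 hrn r' hr'0 hr'n hkey
    rw [heq] at hc₂
    have hd : n ∣ 1 + (t:ℤ) := ⟨-c₂ - u, by linarith⟩
    have := eq_zero_of_dvd_of_bounds hn0 hd (by linarith) (by linarith)
    linarith
  · rw [pair_sub, mem_SBox]
    dsimp only
    rintro ⟨-, -, hhole⟩
    rw [show r + n*u + 1 - 1 = r + n*u by ring, hys u] at hhole
    exact hhole ⟨s, by ring⟩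
  · rw [add_smul_vert, mem_SBox]
    dsimp only
    rw [hk]
    rintro ⟨-, -, hhole⟩
    rw [show r + n*u + 1 + (n-1) = r + n*(u+1) by ring, hys (u+1)] at hhole
    exact hhole ⟨s, by ring⟩

lemma isPatternStart_diag (hn : 3 ≤ n) (hm : 2 ≤ m) {k : ℕ} (hk : (k:ℤ) = n - 1)
    {r s u : ℤ} (hr : r ∈ Q.Gm) (hs0 : 0 ≤ s) (hs : s < m - 1)
    (hu0 : 0 ≤ u) (hu : u < m - 1) :
    IsPatternStart (SBox n Q m) k (1,1) (Q.σ r + n*s + 1, r + n*u + 1) := by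
  have hn0 : (0:ℤ) < n := by omega
  obtain ⟨hr0, hrn⟩ := Q.gm_sub r hr
  have hσ0 := Q.σ_nonneg r hr0 hrn
  have hσn := Q.σ_lt r hr0 hrn
  have hns0 : 0 ≤ n * s := mul_nonneg hn0.le hs0
  have hnu0 : 0 ≤ n * u := mul_nonneg hn0.le hu0
  have hns : n * s ≤ n * (m - 2) := mul_le_mul_of_nonneg_left (by omega) hn0.le
  have hnu : n * u ≤ n * (m - 2) := mul_le_mul_of_nonneg_left (by omega) hn0.le
  have hys : ∀ v : ℤ, (r + n * v) % n = r := fun v => by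
    rw [Int.add_mul_emod_self_left, Int.emod_eq_of_lt hr0 hrn]
  refine ⟨?_, ?_, ?_⟩
  · intro t ht
    have ht0 : (0:ℤ) ≤ (t:ℤ) := Int.natCast_nonneg t
    have htk : (t:ℤ) < (k:ℤ) := by exact_mod_cast ht
    rw [hk] at htk
    rw [add_smul_diag, mem_SBox]
    dsimp only
    refine ⟨⟨by linarith, by linarith⟩, ⟨by linarith, by linarith⟩, ?_⟩
    intro hdvd
    set Y := r + n*u + 1 + (t:ℤ) with hY
    set r' := Y % n with hr'def
    have hr'0 : 0 ≤ r' := Int.emod_nonneg Y hn0.ne'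
    have hr'n : r' < n := Int.emod_lt_of_pos Y hn0
    obtain ⟨c₂, hc₂⟩ : n ∣ r' - Y := emod_sub_dvd n Y
    obtain ⟨c₁, hc₁⟩ := hdvd
    have hkey : n ∣ (Q.σ r' - r') - (Q.σ r - r) := ⟨s - c₁ - u - c₂, by linarith⟩
    have heq := Q.diag r hr r' hr'0 hr'n hkey
    rw [heq] at hc₂
    have hd : n ∣ 1 + (t:ℤ) := ⟨-c₂ - u, by linarith⟩
    have := eq_zero_of_dvd_of_bounds hn0 hd (by linarith) (by linarith)
    linarith
  · rw [pair_sub, mem_SBox]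
    dsimp only
    rintro ⟨-, -, hhole⟩
    rw [show r + n*u + 1 - 1 = r + n*u by ring, hys u] at hhole
    exact hhole ⟨s, by ring⟩
  · rw [add_smul_diag, mem_SBox]
    dsimp only
    rw [hk]
    rintro ⟨-, -, hhole⟩
    rw [show r + n*u + 1 + (n-1) = r + n*(u+1) by ring, hys (u+1)] at hhole
    exact hhole ⟨s + 1, by ring⟩

lemma isPatternStart_adiag (hn : 3 ≤ n) (hm : 2 ≤ m) {k : ℕ} (hk : (k:ℤ) = n - 1)
    {r s u : ℤ} (hr : r ∈ Q.Gp) (hs0 : 0 ≤ s) (hs : s < m - 1)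
    (hu0 : 0 ≤ u) (hu : u < m - 1) :
    IsPatternStart (SBox n Q m) k (1,-1) (Q.σ r + n*s + 1, r + n*u + n - 1) := by
  have hn0 : (0:ℤ) < n := by omega
  obtain ⟨hr0, hrn⟩ := Q.gp_sub r hr
  have hσ0 := Q.σ_nonneg r hr0 hrn
  have hσn := Q.σ_lt r hr0 hrn
  have hns0 : 0 ≤ n * s := mul_nonneg hn0.le hs0
  have hnu0 : 0 ≤ n * u := mul_nonneg hn0.le hu0
  have hns : n * s ≤ n * (m - 2) := mul_le_mul_of_nonneg_left (by omega) hn0.le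
  have hnu : n * u ≤ n * (m - 2) := mul_le_mul_of_nonneg_left (by omega) hn0.le
  have hys : ∀ v : ℤ, (r + n * v) % n = r := fun v => by
    rw [Int.add_mul_emod_self_left, Int.emod_eq_of_lt hr0 hrn]
  refine ⟨?_, ?_, ?_⟩
  · intro t ht
    have ht0 : (0:ℤ) ≤ (t:ℤ) := Int.natCast_nonneg t
    have htk : (t:ℤ) < (k:ℤ) := by exact_mod_cast ht
    rw [hk] at htk
    rw [add_smul_adiag, mem_SBox]
    dsimp only
    refine ⟨⟨by linarith, by linarith⟩, ⟨by linarith, by linarith⟩, ?_⟩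
    intro hdvd
    set Y := r + n*u + n - 1 - (t:ℤ) with hY
    set r' := Y % n with hr'def
    have hr'0 : 0 ≤ r' := Int.emod_nonneg Y hn0.ne'
    have hr'n : r' < n := Int.emod_lt_of_pos Y hn0
    obtain ⟨c₂, hc₂⟩ : n ∣ r' - Y := emod_sub_dvd n Y
    obtain ⟨c₁, hc₁⟩ := hdvd
    have hkey : n ∣ (Q.σ r' + r') - (Q.σ r + r) := ⟨s - c₁ + u + 1 + c₂, by linarith⟩
    have heq := Q.adiag r hr r' hr'0 hr'n hkey
    rw [heq] at hc₂
    have hd : n ∣ 1 + (t:ℤ) := ⟨u + 1 + c₂, by linarith⟩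
    have := eq_zero_of_dvd_of_bounds hn0 hd (by linarith) (by linarith)
    linarith
  · rw [pair_sub, mem_SBox]
    dsimp only
    rintro ⟨-, -, hhole⟩
    rw [show r + n*u + n - 1 - (-1) = r + n*(u+1) by ring, hys (u+1)] at hhole
    exact hhole ⟨s, by ring⟩
  · rw [add_smul_adiag, mem_SBox]
    dsimp only
    rw [hk]
    rintro ⟨-, -, hhole⟩
    rw [show r + n*u + n - 1 - (n-1) = r + n*u by ring, hys u] at hhole
    exact hhole ⟨s + 1, by ring⟩


/-- Horizontal pattern starts. -/
noncomputable def F1 : Finset ((ℤ×ℤ)×(ℤ×ℤ)) :=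
  (Finset.Ico 0 (n*m) ×ˢ Finset.Ico 0 (m-1)).image
    (fun w : ℤ × ℤ => (((1:ℤ),(0:ℤ)), (Q.σ (w.1 % n) + n*w.2 + 1, w.1)))

noncomputable def F2 : Finset ((ℤ×ℤ)×(ℤ×ℤ)) :=
  (Finset.Ico 0 n ×ˢ Finset.Ico 0 m ×ˢ Finset.Ico 0 (m-1)).image
    (fun w : ℤ × ℤ × ℤ => (((0:ℤ),(1:ℤ)), (Q.σ w.1 + n*w.2.1, w.1 + n*w.2.2 + 1)))

noncomputable def F3 : Finset ((ℤ×ℤ)×(ℤ×ℤ)) :=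
  (Q.Gm ×ˢ Finset.Ico 0 (m-1) ×ˢ Finset.Ico 0 (m-1)).image
    (fun w : ℤ × ℤ × ℤ => (((1:ℤ),(1:ℤ)), (Q.σ w.1 + n*w.2.1 + 1, w.1 + n*w.2.2 + 1)))

noncomputable def F4 : Finset ((ℤ×ℤ)×(ℤ×ℤ)) :=
  (Q.Gp ×ˢ Finset.Ico 0 (m-1) ×ˢ Finset.Ico 0 (m-1)).image
    (fun w : ℤ × ℤ × ℤ => (((1:ℤ),(-1:ℤ)), (Q.σ w.1 + n*w.2.1 + 1, w.1 + n*w.2.2 + n - 1)))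

lemma card_F1 (hn : 3 ≤ n) (hm : 2 ≤ m) : (F1 n Q m).card = (n*m).toNat * (m-1).toNat := by
  have hn0 : (0:ℤ) < n := by omega
  rw [F1, Finset.card_image_of_injOn, Finset.card_product, Int.card_Ico, Int.card_Ico]
  · norm_num
  · intro w hw w' hw' he
    simp only [Finset.coe_product, Set.mem_prod, Finset.mem_coe, Finset.mem_Ico] at hw hw'
    simp only [Prod.mk.injEq] at he
    obtain ⟨-, hx, hy⟩ := he
    have h1 : w.1 = w'.1 := hy
    rw [h1] at hx
    have h2 : n * w.2 = n * w'.2 := by omega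
    exact Prod.ext h1 (mul_left_cancel₀ hn0.ne' h2)

lemma card_F2 (hn : 3 ≤ n) (hm : 2 ≤ m) :
    (F2 n Q m).card = n.toNat * (m.toNat * (m-1).toNat) := by
  have hn0 : (0:ℤ) < n := by omega
  rw [F2, Finset.card_image_of_injOn, Finset.card_product, Finset.card_product,
    Int.card_Ico, Int.card_Ico, Int.card_Ico]
  · norm_num
  · intro w hw w' hw' he
    simp only [Finset.coe_product, Set.mem_prod, Finset.mem_coe, Finset.mem_Ico] at hw hw'
    obtain ⟨⟨hr0, hrn⟩, ⟨hs0, hsm⟩, hu0, hum⟩ := hw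
    obtain ⟨⟨hr0', hrn'⟩, ⟨hs0', hsm'⟩, hu0', hum'⟩ := hw'
    simp only [Prod.mk.injEq] at he
    obtain ⟨-, hx, hy⟩ := he
    have hr : w.1 = w'.1 := by
      have hd : n ∣ w.1 - w'.1 := ⟨w'.2.2 - w.2.2, by linarith⟩
      have := eq_zero_of_dvd_of_bounds hn0 hd (by omega) (by omega)
      omega
    rw [hr] at hx hy
    have hu : w.2.2 = w'.2.2 := mul_left_cancel₀ hn0.ne' (by omega : n * w.2.2 = n * w'.2.2)
    have hs : w.2.1 = w'.2.1 := mul_left_cancel₀ hn0.ne' (by omega : n * w.2.1 = n * w'.2.1)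
    exact Prod.ext hr (Prod.ext hs hu)

lemma card_F3 (hn : 3 ≤ n) (hm : 2 ≤ m) :
    (F3 n Q m).card = Q.Gm.card * ((m-1).toNat * (m-1).toNat) := by
  have hn0 : (0:ℤ) < n := by omega
  rw [F3, Finset.card_image_of_injOn, Finset.card_product, Finset.card_product,
    Int.card_Ico]
  · norm_num
  · intro w hw w' hw' he
    simp only [Finset.coe_product, Set.mem_prod, Finset.mem_coe, Finset.mem_Ico] at hw hw'
    obtain ⟨hg, ⟨hs0, hsm⟩, hu0, hum⟩ := hw
    obtain ⟨hg', ⟨hs0', hsm'⟩, hu0', hum'⟩ := hw'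
    obtain ⟨hr0, hrn⟩ := Q.gm_sub _ hg
    obtain ⟨hr0', hrn'⟩ := Q.gm_sub _ hg'
    simp only [Prod.mk.injEq] at he
    obtain ⟨-, hx, hy⟩ := he
    have hr : w.1 = w'.1 := by
      have hd : n ∣ w.1 - w'.1 := ⟨w'.2.2 - w.2.2, by linarith⟩
      have := eq_zero_of_dvd_of_bounds hn0 hd (by omega) (by omega)
      omega
    rw [hr] at hx hy
    have hu : w.2.2 = w'.2.2 := mul_left_cancel₀ hn0.ne' (by omega : n * w.2.2 = n * w'.2.2)
    have hs : w.2.1 = w'.2.1 := mul_left_cancel₀ hn0.ne' (by omega : n * w.2.1 = n * w'.2.1)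
    exact Prod.ext hr (Prod.ext hs hu)

lemma card_F4 (hn : 3 ≤ n) (hm : 2 ≤ m) :
    (F4 n Q m).card = Q.Gp.card * ((m-1).toNat * (m-1).toNat) := by
  have hn0 : (0:ℤ) < n := by omega
  rw [F4, Finset.card_image_of_injOn, Finset.card_product, Finset.card_product,
    Int.card_Ico]
  · norm_num
  · intro w hw w' hw' he
    simp only [Finset.coe_product, Set.mem_prod, Finset.mem_coe, Finset.mem_Ico] at hw hw'
    obtain ⟨hg, ⟨hs0, hsm⟩, hu0, hum⟩ := hw
    obtain ⟨hg', ⟨hs0', hsm'⟩, hu0', hum'⟩ := hw'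
    obtain ⟨hr0, hrn⟩ := Q.gp_sub _ hg
    obtain ⟨hr0', hrn'⟩ := Q.gp_sub _ hg'
    simp only [Prod.mk.injEq] at he
    obtain ⟨-, hx, hy⟩ := he
    have hr : w.1 = w'.1 := by
      have hd : n ∣ w.1 - w'.1 := ⟨w'.2.2 - w.2.2, by linarith⟩
      have := eq_zero_of_dvd_of_bounds hn0 hd (by omega) (by omega)
      omega
    rw [hr] at hx hy
    have hu : w.2.2 = w'.2.2 := mul_left_cancel₀ hn0.ne' (by omega : n * w.2.2 = n * w'.2.2)
    have hs : w.2.1 = w'.2.1 := mul_left_cancel₀ hn0.ne' (by omega : n * w.2.1 = n * w'.2.1)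
    exact Prod.ext hr (Prod.ext hs hu)


lemma patternCount_ge (hn : 3 ≤ n) (hm : 2 ≤ m) {k : ℕ} (hk : (k:ℤ) = n - 1)
    (hk1 : 1 ≤ k) :
    (4*n - 4) * ((m-1)*(m-1)) ≤ (patternCount (SBox n Q m) k : ℤ) := by
  classical
  have hn0 : (0:ℤ) < n := by omega
  set P : Set ((ℤ×ℤ)×(ℤ×ℤ)) :=
    {dp | dp.1 ∈ Dirs ∧ IsPatternStart (SBox n Q m) k dp.1 dp.2} with hP
  have hPfin : P.Finite := by
    apply Set.Finite.subset (Dirs ×ˢ (SBox n Q m)).finite_toSet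
    rintro ⟨d, p⟩ ⟨hd, hps⟩
    have := hps.1 0 (by omega)
    simp only [Nat.cast_zero, zero_smul, add_zero] at this
    simp only [Finset.coe_product, Set.mem_prod, Finset.mem_coe]
    exact ⟨hd, this⟩
  set F : Finset ((ℤ×ℤ)×(ℤ×ℤ)) := F1 n Q m ∪ F2 n Q m ∪ F3 n Q m ∪ F4 n Q m with hF
  have hsub : (F : Set ((ℤ×ℤ)×(ℤ×ℤ))) ⊆ P := by
    intro dp hdp
    simp only [hF, Finset.coe_union, Set.mem_union, Finset.mem_coe] at hdp
    rcases hdp with ((h1 | h2) | h3) | h4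
    · simp only [F1, Finset.mem_image, Finset.mem_product, Finset.mem_Ico] at h1
      obtain ⟨⟨y, s⟩, ⟨⟨hy0, hy⟩, hs0, hs⟩, rfl⟩ := h1
      exact ⟨by simp [Dirs], isPatternStart_horiz n Q m hn hm hk hy0 hy hs0 hs⟩
    · simp only [F2, Finset.mem_image, Finset.mem_product, Finset.mem_Ico] at h2
      obtain ⟨⟨r, s, u⟩, ⟨⟨hr0, hrn⟩, ⟨hs0, hs⟩, hu0, hu⟩, rfl⟩ := h2
      exact ⟨by simp [Dirs], isPatternStart_vert n Q m hn hm hk hr0 hrn hs0 hs hu0 hu⟩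
    · simp only [F3, Finset.mem_image, Finset.mem_product, Finset.mem_Ico] at h3
      obtain ⟨⟨r, s, u⟩, ⟨hg, ⟨hs0, hs⟩, hu0, hu⟩, rfl⟩ := h3
      exact ⟨by simp [Dirs], isPatternStart_diag n Q m hn hm hk hg hs0 hs hu0 hu⟩
    · simp only [F4, Finset.mem_image, Finset.mem_product, Finset.mem_Ico] at h4
      obtain ⟨⟨r, s, u⟩, ⟨hg, ⟨hs0, hs⟩, hu0, hu⟩, rfl⟩ := h4
      exact ⟨by simp [Dirs], isPatternStart_adiag n Q m hn hm hk hg hs0 hs hu0 hu⟩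
  have hFP : (F.card : ℤ) ≤ (patternCount (SBox n Q m) k : ℤ) := by
    have := Set.ncard_le_ncard hsub hPfin
    rw [Set.ncard_coe_finset] at this
    rw [patternCount]
    exact_mod_cast this
  -- disjointness: the four families have distinct directions
  have d12 : Disjoint (F1 n Q m) (F2 n Q m) := by
    rw [Finset.disjoint_left]
    intro a ha hb
    simp only [F1, Finset.mem_image] at ha
    simp only [F2, Finset.mem_image] at hb
    obtain ⟨w, -, rfl⟩ := ha
    obtain ⟨w', -, hb⟩ := hb
    exact absurd (congrArg Prod.fst hb) (by norm_num [Prod.ext_iff])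
  have d123 : Disjoint (F1 n Q m ∪ F2 n Q m) (F3 n Q m) := by
    rw [Finset.disjoint_left]
    intro a ha hb
    simp only [Finset.mem_union] at ha
    simp only [F3, Finset.mem_image] at hb
    obtain ⟨w', -, hb⟩ := hb
    rcases ha with ha | ha
    · simp only [F1, Finset.mem_image] at ha
      obtain ⟨w, -, rfl⟩ := ha
      exact absurd (congrArg Prod.fst hb) (by norm_num [Prod.ext_iff])
    · simp only [F2, Finset.mem_image] at ha
      obtain ⟨w, -, rfl⟩ := ha
      exact absurd (congrArg Prod.fst hb) (by norm_num [Prod.ext_iff])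
  have d1234 : Disjoint (F1 n Q m ∪ F2 n Q m ∪ F3 n Q m) (F4 n Q m) := by
    rw [Finset.disjoint_left]
    intro a ha hb
    simp only [Finset.mem_union] at ha
    simp only [F4, Finset.mem_image] at hb
    obtain ⟨w', -, hb⟩ := hb
    rcases ha with (ha | ha) | ha
    · simp only [F1, Finset.mem_image] at ha
      obtain ⟨w, -, rfl⟩ := ha
      exact absurd (congrArg Prod.fst hb) (by norm_num [Prod.ext_iff])
    · simp only [F2, Finset.mem_image] at ha
      obtain ⟨w, -, rfl⟩ := ha
      exact absurd (congrArg Prod.fst hb) (by norm_num [Prod.ext_iff])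
    · simp only [F3, Finset.mem_image] at ha
      obtain ⟨w, -, rfl⟩ := ha
      exact absurd (congrArg Prod.fst hb) (by norm_num [Prod.ext_iff])
  have hcard : F.card = (F1 n Q m).card + (F2 n Q m).card + (F3 n Q m).card
      + (F4 n Q m).card := by
    rw [hF, Finset.card_union_of_disjoint d1234, Finset.card_union_of_disjoint d123,
      Finset.card_union_of_disjoint d12]
  -- convert everything to ℤ
  have hm0' : (0:ℤ) ≤ m := by omega
  have e1 : ((n*m).toNat : ℤ) = n*m := Int.toNat_of_nonneg (mul_nonneg hn0.le hm0')
  have e2 : ((m-1).toNat : ℤ) = m-1 := Int.toNat_of_nonneg (by omega)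
  have e3 : ((n).toNat : ℤ) = n := Int.toNat_of_nonneg (by omega)
  have e4 : ((m).toNat : ℤ) = m := Int.toNat_of_nonneg (by omega)
  have hcardZ : (F.card : ℤ) = n*m*(m-1) + n*(m*(m-1))
      + (Q.Gm.card : ℤ) * ((m-1)*(m-1)) + (Q.Gp.card : ℤ) * ((m-1)*(m-1)) := by
    rw [hcard]
    push_cast [card_F1 n Q m hn hm, card_F2 n Q m hn hm, card_F3 n Q m hn hm,
      card_F4 n Q m hn hm, e1, e2, e3, e4]
    ring
  have hGG := Q.cards
  have hmm : (1:ℤ) ≤ m - 1 := by omega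
  have key : (4*n - 4) * ((m-1)*(m-1)) ≤ (F.card : ℤ) := by
    rw [hcardZ]
    have h5 : n*(m-1)*(m-1) ≤ n*m*(m-1) := by nlinarith
    have h6 : n*(m-1)*(m-1) ≤ n*(m*(m-1)) := by nlinarith
    nlinarith [mul_le_mul_of_nonneg_right hGG
      (mul_nonneg (by omega : (0:ℤ) ≤ m-1) (by omega : (0:ℤ) ≤ m-1))]
  linarith

lemma card_SBox_le (hn : 3 ≤ n) (hm : 2 ≤ m) :
    ((SBox n Q m).card : ℤ) ≤ (n*n - n)*(m*m) := by
  have hn0 : (0:ℤ) < n := by omega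
  have hbox : ((Finset.Ico (0:ℤ) (n*m) ×ˢ Finset.Ico (0:ℤ) (n*m)).card : ℤ)
      = (n*m)*(n*m) := by
    rw [Finset.card_product, Int.card_Ico]
    have h : (0:ℤ) ≤ n*m - 0 := by
      have := mul_nonneg hn0.le (by omega : (0:ℤ) ≤ m); omega
    push_cast [Int.toNat_of_nonneg h]
    ring
  have hsplit := Finset.card_filter_add_card_filter_not
    (s := Finset.Ico (0:ℤ) (n*m) ×ˢ Finset.Ico (0:ℤ) (n*m))
    (p := fun p : ℤ × ℤ => (n ∣ p.1 - Q.σ (p.2 % n)))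
  have hholes : (n*(m*m) : ℤ) ≤ (((Finset.Ico (0:ℤ) (n*m) ×ˢ Finset.Ico (0:ℤ) (n*m)).filter
      (fun p : ℤ × ℤ => (n ∣ p.1 - Q.σ (p.2 % n)))).card : ℤ) := by
    have hcard := Finset.card_le_card_of_injOn
      (f := fun w : ℤ × ℤ × ℤ => ((Q.σ w.1 + n * w.2.1, w.1 + n * w.2.2) : ℤ × ℤ))
      (s := Finset.Ico (0:ℤ) n ×ˢ Finset.Ico (0:ℤ) m ×ˢ Finset.Ico (0:ℤ) m)
      (t := (Finset.Ico 0 (n*m) ×ˢ Finset.Ico 0 (n*m)).filter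
        fun p : ℤ × ℤ => (n ∣ p.1 - Q.σ (p.2 % n)))
      ?maps ?inj
    case maps =>
      rintro ⟨r, s, u⟩ hw
      simp only [Finset.mem_coe, Finset.mem_product, Finset.mem_Ico] at hw
      obtain ⟨⟨hr0, hrn⟩, ⟨hs0, hsm⟩, hu0, hum⟩ := hw
      have h1 := Q.σ_nonneg r hr0 hrn
      have h2 := Q.σ_lt r hr0 hrn
      have hys : (r + n * u) % n = r := by
        rw [Int.add_mul_emod_self_left, Int.emod_eq_of_lt hr0 hrn]
      have hns0 : 0 ≤ n * s := mul_nonneg hn0.le hs0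
      have hnu0 : 0 ≤ n * u := mul_nonneg hn0.le hu0
      have hns : n * s ≤ n * (m - 1) := mul_le_mul_of_nonneg_left (by omega) hn0.le
      have hnu : n * u ≤ n * (m - 1) := mul_le_mul_of_nonneg_left (by omega) hn0.le
      simp only [Finset.mem_coe, Finset.mem_filter, Finset.mem_product, Finset.mem_Ico]
      exact ⟨⟨⟨by linarith, by linarith⟩, by linarith, by linarith⟩,
        by rw [hys]; exact ⟨s, by ring⟩⟩
    case inj =>
      rintro ⟨r, s, u⟩ hw ⟨r', s', u'⟩ hw' he
      simp only [Finset.mem_coe, Finset.mem_product, Finset.mem_Ico] at hw hw'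
      obtain ⟨⟨hr0, hrn⟩, ⟨hs0, hsm⟩, hu0, hum⟩ := hw
      obtain ⟨⟨hr0', hrn'⟩, ⟨hs0', hsm'⟩, hu0', hum'⟩ := hw'
      simp only [Prod.mk.injEq] at he
      obtain ⟨hx, hy⟩ := he
      have hr : r = r' := by
        have hd : n ∣ r - r' := ⟨u' - u, by linarith⟩
        have := eq_zero_of_dvd_of_bounds hn0 hd (by omega) (by omega)
        omega
      subst hr
      have hu : u = u' := mul_left_cancel₀ hn0.ne' (by omega : n * u = n * u')
      have hs : s = s' := mul_left_cancel₀ hn0.ne' (by omega : n * s = n * s')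
      simp [hu, hs]
    rw [Finset.card_product, Finset.card_product] at hcard
    simp only [Int.card_Ico] at hcard
    have e1 : ((n - 0).toNat : ℤ) = n := by omega
    have e2 : ((m - 0).toNat : ℤ) = m := by omega
    calc (n*(m*m) : ℤ) = ((n-0).toNat : ℤ) * (((m-0).toNat : ℤ) * ((m-0).toNat : ℤ)) := by
          rw [e1, e2]; try ring
      _ ≤ _ := by exact_mod_cast hcard
  have hS : ((SBox n Q m).card : ℤ)
      = ((Finset.Ico (0:ℤ) (n*m) ×ˢ Finset.Ico (0:ℤ) (n*m)).card : ℤ)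
        - (((Finset.Ico (0:ℤ) (n*m) ×ˢ Finset.Ico (0:ℤ) (n*m)).filter
        (fun p : ℤ × ℤ => (n ∣ p.1 - Q.σ (p.2 % n)))).card : ℤ) := by
    rw [SBox]
    push_cast [← hsplit]
    ring
  rw [hS, hbox]
  nlinarith [hholes]


lemma dvd_cancel_prime {n a p : ℤ} (hp : Prime p) (hnp : ¬ p ∣ n) (h : n ∣ p * a) : n ∣ a :=
  ((hp.coprime_iff_not_dvd).mpr hnp).symm.dvd_of_dvd_mul_left h

/-- The configuration for `n` odd (with `3 ∤ n`) : `σ r = 2r mod n`. -/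
noncomputable def oddConf (n : ℤ) (hn : 3 ≤ n) (h2 : ¬ (2:ℤ) ∣ n) (h3 : ¬ (3:ℤ) ∣ n) : QConf n where
  σ := fun r => (2*r) % n
  Gm := Finset.Ico 0 n
  Gp := Finset.Ico 0 n
  σ_nonneg := fun r _ _ => Int.emod_nonneg _ (by omega)
  σ_lt := fun r _ _ => Int.emod_lt_of_pos _ (by omega)
  inj := by
    intro r hr0 hrn r' hr'0 hr'n hd
    rw [dvd_emod_left_iff, dvd_emod_right_iff] at hd
    have h2' : n ∣ 2 * (r' - r) := by
      rw [show 2*(r'-r) = 2*r' - 2*r by ring]; exact hd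
    have := dvd_cancel_prime Int.prime_two h2 h2'
    have := eq_zero_of_dvd_of_bounds (by omega) this (by omega) (by omega)
    omega
  gm_sub := fun r h => by simpa [Finset.mem_Ico] using h
  gp_sub := fun r h => by simpa [Finset.mem_Ico] using h
  diag := by
    intro r hr r' hr'0 hr'n hd
    rw [Finset.mem_Ico] at hr
    obtain ⟨hr0, hrn⟩ := hr
    obtain ⟨c₁, hc₁⟩ := hd
    obtain ⟨c₂, hc₂⟩ := emod_sub_dvd n (2*r')
    obtain ⟨c₃, hc₃⟩ := emod_sub_dvd n (2*r)
    have hd2 : n ∣ r' - r := ⟨c₁ - c₂ + c₃, by linarith⟩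
    have := eq_zero_of_dvd_of_bounds (by omega) hd2 (by omega) (by omega)
    omega
  adiag := by
    intro r hr r' hr'0 hr'n hd
    rw [Finset.mem_Ico] at hr
    obtain ⟨hr0, hrn⟩ := hr
    obtain ⟨c₁, hc₁⟩ := hd
    obtain ⟨c₂, hc₂⟩ := emod_sub_dvd n (2*r')
    obtain ⟨c₃, hc₃⟩ := emod_sub_dvd n (2*r)
    have hd2 : n ∣ 3 * (r' - r) := ⟨c₁ - c₂ + c₃, by linarith⟩
    have := dvd_cancel_prime Int.prime_three h3 hd2
    have := eq_zero_of_dvd_of_bounds (by omega) this (by omega) (by omega)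
    omega
  cards := by
    rw [Int.card_Ico]
    have : ((n - 0).toNat : ℤ) = n := by omega
    omega


/-- `σ` for `n = 2m'` even : `σ 0 = m'`, `σ r = 3r mod n` for `1 ≤ r < m'`,
`σ r = 3r+3 mod n` for `m' ≤ r < n`. -/
def evenSigma (n m' : ℤ) : ℤ → ℤ :=
  fun r => if r = 0 then m' else (3*r + if r < m' then 0 else 3) % n

/-- The configuration for `n = 2 m'` with `m'` odd, `3 ∤ n`. -/
noncomputable def evenConf (n m' : ℤ) (hn : 3 ≤ n) (hm : n = 2*m') (hodd : ¬ (2:ℤ) ∣ m')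
    (h3 : ¬ (3:ℤ) ∣ n) : QConf n where
  σ := evenSigma n m'
  Gm := (Finset.Ico 1 n).filter (fun r => r < m' ∨ ¬ (n ∣ 2*r + 3 - m'))
  Gp := (Finset.Ico 1 n).filter (fun r => r < m' ∨ ¬ (n ∣ 4*r + 3 - m'))
  σ_nonneg := by
    intro r h0 h1
    rw [evenSigma]
    by_cases hz : r = 0
    · rw [if_pos hz]; omega
    · rw [if_neg hz]; exact Int.emod_nonneg _ (by omega)
  σ_lt := by
    intro r h0 h1
    rw [evenSigma]
    by_cases hz : r = 0
    · rw [if_pos hz]; omega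
    · rw [if_neg hz]; exact Int.emod_lt_of_pos _ (by omega)
  inj := by
    intro r hr0 hrn r' hr'0 hr'n hd
    have hn0 : (0:ℤ) < n := by omega
    have hv : ∀ x, n ∣ evenSigma n m' x -
        (if x = 0 then m' else if x < m' then 3*x else 3*x+3) := by
      intro x
      rw [evenSigma]
      by_cases hz : x = 0
      · rw [if_pos hz, if_pos hz]; simp
      · rw [if_neg hz, if_neg hz]
        by_cases hlt : x < m'
        · rw [if_pos hlt, if_pos hlt]
          simpa using emod_sub_dvd n (3*x + 0)
        · rw [if_neg hlt, if_neg hlt]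
          exact emod_sub_dvd n (3*x+3)
    obtain ⟨a, ha⟩ := hv r
    obtain ⟨b, hb⟩ := hv r'
    obtain ⟨c, hc⟩ := hd
    have key : n ∣ (if r' = 0 then m' else if r' < m' then 3*r' else 3*r'+3)
        - (if r = 0 then m' else if r < m' then 3*r else 3*r+3) :=
      ⟨c - b + a, by linarith⟩
    clear ha hb hc hv
    by_cases hz : r = 0 <;> by_cases hz' : r' = 0
    · omega
    · -- r = 0, r' ≠ 0
      rw [if_pos hz, if_neg hz'] at key
      by_cases hlt' : r' < m'
      · rw [if_pos hlt'] at key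
        have := eq_zero_of_dvd_of_bounds hn0 key (by omega) (by omega)
        -- 3r' = m'
        exfalso
        exact h3 ⟨2*r', by omega⟩
      · rw [if_neg hlt'] at key
        have key3 : n ∣ (3*r'+3 - m') - 2*n := dvd_sub key ⟨2, by ring⟩
        have h0 := eq_zero_of_dvd_of_bounds hn0 key3 (by omega) (by omega)
        -- 3r' + 3 = 5m'
        have h53 : (3:ℤ) ∣ 5*m' := ⟨r'+1, by omega⟩
        have h6 : (3:ℤ) ∣ 6*m' := ⟨2*m', by ring⟩
        have hm3 : (3:ℤ) ∣ m' := by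
          have := dvd_sub h6 h53
          rwa [show 6*m' - 5*m' = m' by ring] at this
        obtain ⟨w, hw⟩ := hm3
        exact absurd ⟨2*w, by omega⟩ h3
    · -- r ≠ 0, r' = 0
      rw [if_neg hz, if_pos hz'] at key
      by_cases hlt : r < m'
      · rw [if_pos hlt] at key
        have key' : n ∣ 3*r - m' := by
          have := dvd_neg.mpr key
          rwa [show -(m' - 3*r) = 3*r - m' by ring] at this
        have := eq_zero_of_dvd_of_bounds hn0 key' (by omega) (by omega)
        exact absurd ⟨2*r, by omega⟩ h3
      · rw [if_neg hlt] at key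
        have key' : n ∣ (3*r+3 - m') - 2*n := by
          have := dvd_neg.mpr key
          have h2 : n ∣ (3*r+3) - m' := by
            rwa [show -(m' - (3*r+3)) = 3*r+3 - m' by ring] at this
          exact dvd_sub h2 ⟨2, by ring⟩
        have h0 := eq_zero_of_dvd_of_bounds hn0 key' (by omega) (by omega)
        have h53 : (3:ℤ) ∣ 5*m' := ⟨r+1, by omega⟩
        have h6 : (3:ℤ) ∣ 6*m' := ⟨2*m', by ring⟩
        have hm3 : (3:ℤ) ∣ m' := by
          have := dvd_sub h6 h53
          rwa [show 6*m' - 5*m' = m' by ring] at this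
        obtain ⟨w, hw⟩ := hm3
        exact absurd ⟨2*w, by omega⟩ h3
    · -- r ≠ 0, r' ≠ 0
      rw [if_neg hz, if_neg hz'] at key
      by_cases hlt : r < m' <;> by_cases hlt' : r' < m'
      · rw [if_pos hlt, if_pos hlt'] at key
        have key' : n ∣ 3*(r' - r) := by
          rwa [show 3*(r'-r) = 3*r' - 3*r by ring]
        have := dvd_cancel_prime Int.prime_three h3 key'
        have := eq_zero_of_dvd_of_bounds hn0 this (by omega) (by omega)
        omega
      · rw [if_pos hlt, if_neg hlt'] at key
        have key' : n ∣ 3*(r' - r + 1) := by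
          rwa [show 3*(r'-r+1) = 3*r'+3 - 3*r by ring]
        have := dvd_cancel_prime Int.prime_three h3 key'
        have := eq_zero_of_dvd_of_bounds hn0 this (by omega) (by omega)
        omega
      · rw [if_neg hlt, if_pos hlt'] at key
        have key' : n ∣ 3*(r' - r - 1) := by
          rwa [show 3*(r'-r-1) = 3*r' - (3*r+3) by ring]
        have := dvd_cancel_prime Int.prime_three h3 key'
        have := eq_zero_of_dvd_of_bounds hn0 this (by omega) (by omega)
        omega
      · rw [if_neg hlt, if_neg hlt'] at key
        have key' : n ∣ 3*(r' - r) := by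
          rwa [show 3*(r'-r) = (3*r'+3) - (3*r+3) by ring]
        have := dvd_cancel_prime Int.prime_three h3 key'
        have := eq_zero_of_dvd_of_bounds hn0 this (by omega) (by omega)
        omega
  gm_sub := by
    intro r h
    simp only [Finset.mem_filter, Finset.mem_Ico] at h
    omega
  gp_sub := by
    intro r h
    simp only [Finset.mem_filter, Finset.mem_Ico] at h
    omega
  diag := by
    intro r hr r' hr'0 hr'n hd
    have hn0 : (0:ℤ) < n := by omega
    simp only [Finset.mem_filter, Finset.mem_Ico] at hr
    obtain ⟨⟨hr1, hrn⟩, hrG⟩ := hr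
    have hv : ∀ x, n ∣ evenSigma n m' x -
        (if x = 0 then m' else if x < m' then 3*x else 3*x+3) := by
      intro x
      rw [evenSigma]
      by_cases hz : x = 0
      · rw [if_pos hz, if_pos hz]; simp
      · rw [if_neg hz, if_neg hz]
        by_cases hlt : x < m'
        · rw [if_pos hlt, if_pos hlt]
          simpa using emod_sub_dvd n (3*x + 0)
        · rw [if_neg hlt, if_neg hlt]
          exact emod_sub_dvd n (3*x+3)
    obtain ⟨a, ha⟩ := hv r
    obtain ⟨b, hb⟩ := hv r'
    obtain ⟨c, hc⟩ := hd
    have key : n ∣ ((if r' = 0 then m' else if r' < m' then 3*r' else 3*r'+3) - r')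
        - ((if r = 0 then m' else if r < m' then 3*r else 3*r+3) - r) :=
      ⟨c - b + a, by linarith⟩
    clear ha hb hc hv
    have hz : ¬ (r = 0) := by omega
    rw [if_neg hz] at key
    have h2n : (2:ℤ) ∣ n := ⟨m', hm⟩
    by_cases hlt : r < m'
    · rw [if_pos hlt] at key
      by_cases hz' : r' = 0
      · rw [if_pos hz'] at key
        exfalso
        exact not_dvd_of_two_dvd h2n (by omega) key
      · rw [if_neg hz'] at key
        by_cases hlt' : r' < m'
        · rw [if_pos hlt'] at key
          have key' : n ∣ 2*(r'-r) := by
            rwa [show 2*(r'-r) = (3*r' - r') - (3*r - r) by ring]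
          have := eq_zero_of_dvd_of_bounds hn0 key' (by omega) (by omega)
          omega
        · rw [if_neg hlt'] at key
          exfalso
          exact not_dvd_of_two_dvd h2n (by omega) key
    · rw [if_neg hlt] at key
      have hfil : ¬ (n ∣ 2*r + 3 - m') := by tauto
      by_cases hz' : r' = 0
      · rw [if_pos hz'] at key
        exfalso
        apply hfil
        have := dvd_neg.mpr key
        rw [hz'] at this
        rwa [show -(m' - 0 - (3*r+3 - r)) = 2*r + 3 - m' by ring] at this
      · rw [if_neg hz'] at key
        by_cases hlt' : r' < m'
        · rw [if_pos hlt'] at key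
          exfalso
          exact not_dvd_of_two_dvd h2n (by omega) key
        · rw [if_neg hlt'] at key
          have key' : n ∣ 2*(r'-r) := by
            rwa [show 2*(r'-r) = (3*r'+3 - r') - (3*r+3 - r) by ring]
          have := eq_zero_of_dvd_of_bounds hn0 key' (by omega) (by omega)
          omega
  adiag := by
    intro r hr r' hr'0 hr'n hd
    have hn0 : (0:ℤ) < n := by omega
    simp only [Finset.mem_filter, Finset.mem_Ico] at hr
    obtain ⟨⟨hr1, hrn⟩, hrG⟩ := hr
    have hv : ∀ x, n ∣ evenSigma n m' x -
        (if x = 0 then m' else if x < m' then 3*x else 3*x+3) := by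
      intro x
      rw [evenSigma]
      by_cases hz : x = 0
      · rw [if_pos hz, if_pos hz]; simp
      · rw [if_neg hz, if_neg hz]
        by_cases hlt : x < m'
        · rw [if_pos hlt, if_pos hlt]
          simpa using emod_sub_dvd n (3*x + 0)
        · rw [if_neg hlt, if_neg hlt]
          exact emod_sub_dvd n (3*x+3)
    obtain ⟨a, ha⟩ := hv r
    obtain ⟨b, hb⟩ := hv r'
    obtain ⟨c, hc⟩ := hd
    have key : n ∣ ((if r' = 0 then m' else if r' < m' then 3*r' else 3*r'+3) + r')
        - ((if r = 0 then m' else if r < m' then 3*r else 3*r+3) + r) :=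
      ⟨c - b + a, by linarith⟩
    clear ha hb hc hv
    have hz : ¬ (r = 0) := by omega
    rw [if_neg hz] at key
    have h2n : (2:ℤ) ∣ n := ⟨m', hm⟩
    have cancel4 : ∀ x y : ℤ, n ∣ 4*(x - y) → m' ∣ x - y := by
      intro x y h
      obtain ⟨w, hw⟩ := h
      rw [hm] at hw
      have h2' : m' ∣ 2 * (x - y) := ⟨w, by linarith⟩
      exact dvd_cancel_prime Int.prime_two hodd h2'
    by_cases hlt : r < m'
    · rw [if_pos hlt] at key
      by_cases hz' : r' = 0
      · rw [if_pos hz'] at key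
        exfalso
        exact not_dvd_of_two_dvd h2n (by omega) key
      · rw [if_neg hz'] at key
        by_cases hlt' : r' < m'
        · rw [if_pos hlt'] at key
          have key' : n ∣ 4*(r'-r) := by
            rwa [show 4*(r'-r) = (3*r' + r') - (3*r + r) by ring]
          have := cancel4 r' r key'
          have := eq_zero_of_dvd_of_bounds (by omega : (0:ℤ) < m') this (by omega) (by omega)
          omega
        · rw [if_neg hlt'] at key
          exfalso
          exact not_dvd_of_two_dvd h2n (by omega) key
    · rw [if_neg hlt] at key
      have hfil : ¬ (n ∣ 4*r + 3 - m') := by tauto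
      by_cases hz' : r' = 0
      · rw [if_pos hz'] at key
        exfalso
        apply hfil
        have := dvd_neg.mpr key
        rw [hz'] at this
        rwa [show -(m' + 0 - (3*r+3 + r)) = 4*r + 3 - m' by ring] at this
      · rw [if_neg hz'] at key
        by_cases hlt' : r' < m'
        · rw [if_pos hlt'] at key
          exfalso
          exact not_dvd_of_two_dvd h2n (by omega) key
        · rw [if_neg hlt'] at key
          have key' : n ∣ 4*(r'-r) := by
            rwa [show 4*(r'-r) = (3*r'+3 + r') - (3*r+3 + r) by ring]
          have := cancel4 r' r key'
          have := eq_zero_of_dvd_of_bounds (by omega : (0:ℤ) < m') this (by omega) (by omega)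
          omega
  cards := by
    have hn0 : (0:ℤ) < n := by omega
    have hsplit1 := Finset.card_filter_add_card_filter_not
      (s := Finset.Ico (1:ℤ) n) (p := fun r => r < m' ∨ ¬ (n ∣ 2*r + 3 - m'))
    have hsplit2 := Finset.card_filter_add_card_filter_not
      (s := Finset.Ico (1:ℤ) n) (p := fun r => r < m' ∨ ¬ (n ∣ 4*r + 3 - m'))
    have hb1 : ((Finset.Ico (1:ℤ) n).filter
        (fun r => ¬ (r < m' ∨ ¬ (n ∣ 2*r + 3 - m')))).card ≤ 1 := by
      rw [Finset.card_le_one]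
      intro a ha b hbm
      simp only [Finset.mem_filter, Finset.mem_Ico, not_or, not_not] at ha hbm
      obtain ⟨⟨ha1, han⟩, ham, had⟩ := ha
      obtain ⟨⟨hb1', hbn⟩, hbm', hbd⟩ := hbm
      have hdd : n ∣ 2*(a - b) := by
        have := dvd_sub had hbd
        rwa [show 2*a + 3 - m' - (2*b + 3 - m') = 2*(a-b) by ring] at this
      have := eq_zero_of_dvd_of_bounds hn0 hdd (by omega) (by omega)
      omega
    have hb2 : ((Finset.Ico (1:ℤ) n).filter
        (fun r => ¬ (r < m' ∨ ¬ (n ∣ 4*r + 3 - m')))).card ≤ 1 := by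
      rw [Finset.card_le_one]
      intro a ha b hbm
      simp only [Finset.mem_filter, Finset.mem_Ico, not_or, not_not] at ha hbm
      obtain ⟨⟨ha1, han⟩, ham, had⟩ := ha
      obtain ⟨⟨hb1', hbn⟩, hbm', hbd⟩ := hbm
      have hdd : n ∣ 4*(a - b) := by
        have := dvd_sub had hbd
        rwa [show 4*a + 3 - m' - (4*b + 3 - m') = 4*(a-b) by ring] at this
      obtain ⟨w, hw⟩ := hdd
      rw [hm] at hw
      have h2' : m' ∣ 2 * (a - b) := ⟨w, by linarith⟩
      have := dvd_cancel_prime Int.prime_two hodd h2'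
      have := eq_zero_of_dvd_of_bounds (by omega : (0:ℤ) < m') this (by omega) (by omega)
      omega
    have hIco : ((Finset.Ico (1:ℤ) n).card : ℤ) = n - 1 := by
      rw [Int.card_Ico]; omega
    omega


/-- A `QConf` exists whenever `3 ≤ n`, `3 ∤ n` and `4 ∤ n`. -/
lemma qconf_exists (n : ℤ) (hn : 3 ≤ n) (h3 : ¬ (3:ℤ) ∣ n) (h4 : ¬ (4:ℤ) ∣ n) :
    Nonempty (QConf n) := by
  by_cases h2 : (2:ℤ) ∣ n
  · obtain ⟨m', hm'⟩ := h2
    have hodd : ¬ (2:ℤ) ∣ m' := by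
      rintro ⟨w, hw⟩
      exact h4 ⟨w, by omega⟩
    exact ⟨evenConf n m' hn hm' hodd h3⟩
  · exact ⟨oddConf n hn h2 h3⟩

lemma main_ratio_bound (n : ℤ) (Q : QConf n) (hn : 3 ≤ n) {k : ℕ}
    (hk : (k:ℤ) = n - 1) (hk1 : 1 ≤ k) (M : ℕ) (hM : 2*(n*n) + 8 ≤ (M:ℤ)) :
    (minPoints k (patternCount (SBox n Q (M:ℤ)) k) : ℤ) * (4*(k:ℤ))
      ≤ ((k:ℤ)*((k:ℤ)+1)+1) * (patternCount (SBox n Q (M:ℤ)) k : ℤ) := by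
  have hn0 : (0:ℤ) < n := by omega
  have hm2 : (2:ℤ) ≤ (M:ℤ) := by nlinarith
  have hcard := card_SBox_le n Q (M:ℤ) hn hm2
  have hpc := patternCount_ge n Q (M:ℤ) hn hm2 hk hk1
  have hmin : minPoints k (patternCount (SBox n Q (M:ℤ)) k) ≤ (SBox n Q (M:ℤ)).card :=
    Nat.sInf_le ⟨SBox n Q (M:ℤ), rfl, rfl⟩
  have hminZ : (minPoints k (patternCount (SBox n Q (M:ℤ)) k) : ℤ)
      ≤ ((SBox n Q (M:ℤ)).card : ℤ) := by exact_mod_cast hmin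
  have hk4 : 4*(k:ℤ) = 4*n - 4 := by omega
  have hkk : (k:ℤ)*((k:ℤ)+1)+1 = n*n - n + 1 := by rw [hk]; ring
  rw [hk4, hkk]
  set q : ℤ := n*n - n with hq
  have hq0 : 0 < q := by nlinarith
  -- main numeric inequality : q * M^2 * (4n-4) ≤ (q+1) * (4n-4) * (M-1)^2
  have hMq : 2*(q+1) ≤ (M:ℤ) := by nlinarith
  have hsq : (2*(q+1))*(M:ℤ) ≤ (M:ℤ)*(M:ℤ) :=
    mul_le_mul_of_nonneg_right hMq (by omega)
  have hmain : q * ((M:ℤ)*(M:ℤ)) ≤ (q+1) * (((M:ℤ)-1)*((M:ℤ)-1)) := by nlinarith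
  calc (minPoints k (patternCount (SBox n Q (M:ℤ)) k) : ℤ) * (4*n - 4)
      ≤ ((SBox n Q (M:ℤ)).card : ℤ) * (4*n - 4) :=
        mul_le_mul_of_nonneg_right hminZ (by omega)
    _ ≤ (q * ((M:ℤ)*(M:ℤ))) * (4*n - 4) := by
        apply mul_le_mul_of_nonneg_right _ (by omega)
        calc ((SBox n Q (M:ℤ)).card : ℤ) ≤ (n*n - n) * ((M:ℤ)*(M:ℤ)) := hcard
          _ = q * ((M:ℤ)*(M:ℤ)) := by rw [hq]
    _ ≤ ((q+1) * (((M:ℤ)-1)*((M:ℤ)-1))) * (4*n - 4) :=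
        mul_le_mul_of_nonneg_right hmain (by omega)
    _ = (q+1) * ((4*n - 4) * (((M:ℤ)-1)*((M:ℤ)-1))) := by ring
    _ ≤ (q+1) * (patternCount (SBox n Q (M:ℤ)) k : ℤ) :=
        mul_le_mul_of_nonneg_left hpc (by omega)
    _ = (n*n - n + 1) * (patternCount (SBox n Q (M:ℤ)) k : ℤ) := by rw [hq]

lemma pc_pos (n : ℤ) (Q : QConf n) (hn : 3 ≤ n) {k : ℕ}
    (hk : (k:ℤ) = n - 1) (hk1 : 1 ≤ k) (M : ℕ) (hM : 2 ≤ (M:ℤ)) :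
    ((M:ℤ) - 1) ≤ (patternCount (SBox n Q (M:ℤ)) k : ℤ) := by
  have hpc := patternCount_ge n Q (M:ℤ) hn hM hk hk1
  nlinarith

end Stmt15Aux

open Stmt15Aux in
theorem stmt15 (k : ℕ) (hk : 2 ≤ k) (h3 : ¬ 3 ∣ (k + 1)) (h4 : ¬ 4 ∣ (k + 1))
    (L : ℝ) (hL : Tendsto (fun n : ℕ => (minPoints k n : ℝ) / n) atTop (nhds L)) :
    L ≤ ((k : ℝ) * (k + 1) + 1) / (4 * k) := by
  set n : ℤ := (k:ℤ) + 1 with hn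
  have hn3 : ¬ (3:ℤ) ∣ n := by
    rw [hn]
    exact_mod_cast fun h => h3 (by exact_mod_cast h)
  have hn4 : ¬ (4:ℤ) ∣ n := by
    rw [hn]
    exact_mod_cast fun h => h4 (by exact_mod_cast h)
  have hnge : 3 ≤ n := by omega
  obtain ⟨Q⟩ := qconf_exists n hnge hn3 hn4
  have hk' : (k:ℤ) = n - 1 := by omega
  have hk1 : 1 ≤ k := by omega
  set φ : ℕ → ℕ := fun M => patternCount (SBox n Q (M:ℤ)) k with hφ
  have hφtop : Tendsto φ atTop atTop := by
    apply tendsto_atTop_mono' atTop (f₁ := fun M : ℕ => M - 1)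
    · filter_upwards [eventually_ge_atTop 2] with M hM
      have h1 := pc_pos n Q hnge hk' hk1 M (by exact_mod_cast hM)
      have h2 : ((M - 1 : ℕ) : ℤ) ≤ (patternCount (SBox n Q (M:ℤ)) k : ℤ) := by
        push_cast
        omega
      show M - 1 ≤ patternCount (SBox n Q (M:ℤ)) k
      exact_mod_cast h2
    · exact tendsto_sub_atTop_nat 1
  have hev : ∀ᶠ M in atTop,
      ((fun n : ℕ => (minPoints k n : ℝ) / n) ∘ φ) M ≤ ((k : ℝ) * (k + 1) + 1) / (4 * k) := by
    filter_upwards [eventually_ge_atTop ((2*(n*n) + 8).toNat)] with M hM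
    have hMZ : 2*(n*n) + 8 ≤ (M:ℤ) := by
      have : ((2*(n*n) + 8).toNat : ℤ) ≤ (M:ℤ) := by exact_mod_cast hM
      rwa [Int.toNat_of_nonneg (by nlinarith)] at this
    have hM2 : (2:ℤ) ≤ (M:ℤ) := by nlinarith
    have hkey := main_ratio_bound n Q hnge hk' hk1 M hMZ
    have hφpos : 0 < φ M := by
      have h1 := pc_pos n Q hnge hk' hk1 M hM2
      have h2 : (0:ℤ) < (patternCount (SBox n Q (M:ℤ)) k : ℤ) := by omega
      show 0 < patternCount (SBox n Q (M:ℤ)) k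
      exact_mod_cast h2
    have hφR : (0:ℝ) < ((φ M : ℕ) : ℝ) := by exact_mod_cast hφpos
    have hkR : (0:ℝ) < 4 * (k:ℝ) := by
      have : (0:ℝ) < (k:ℝ) := by exact_mod_cast (by omega : 0 < k)
      linarith
    show (minPoints k (φ M) : ℝ) / (φ M) ≤ ((k : ℝ) * (k + 1) + 1) / (4 * k)
    rw [div_le_div_iff₀ hφR hkR]
    have : ((minPoints k (φ M) : ℤ) * (4*(k:ℤ)) : ℤ)
        ≤ ((k:ℤ)*((k:ℤ)+1)+1) * (φ M : ℤ) := hkey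
    calc (minPoints k (φ M) : ℝ) * (4 * (k:ℝ))
        = (((minPoints k (φ M) : ℤ) * (4*(k:ℤ)) : ℤ) : ℝ) := by push_cast; ring
      _ ≤ ((((k:ℤ)*((k:ℤ)+1)+1) * (φ M : ℤ) : ℤ) : ℝ) := by exact_mod_cast this
      _ = ((k : ℝ) * ((k:ℝ) + 1) + 1) * ((φ M : ℕ) : ℝ) := by push_cast; ring
  exact le_of_tendsto (hL.comp hφtop) hev
end

section
/- Writing f(k) for the limit of a_k(n)/n as n → ∞ (which exists for every k ≥ 2), f(k)/k converges to 1/4 as k → ∞. Precisely: for every ε > 0 there exists K such that for every integer k ≥ K and every real L, if a_k(n)/n converges to L as n → ∞, then |L/k - 1/4| ≤ ε. -/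
open Finset Filter

set_option maxHeartbeats 3200000

def cvF (m s : ℤ) : ℤ :=
  if m % 6 = 0 then
    (if 6*s < m then 0 else if 6*s < 2*m then 3 else if 6*s < 3*m then 4
     else if 6*s < 4*m then 1 else if 6*s < 5*m then 2 else 5)
  else if m % 2 = 0 then (if 2*s < m then 0 else 3)
  else if m % 3 = 0 then (if 3*s < m then 0 else if 3*s < 2*m then -2 else 2)
  else 0

def Ff (m s : ℤ) : ℤ := 2*s + cvF m s

def GoodP (m s : ℤ) : Prop :=
  60 ≤ 6*s ∧ 6*s + 60 ≤ 6*m ∧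
  (6*s + 60 ≤ m ∨ m + 60 ≤ 6*s) ∧
  (6*s + 60 ≤ 2*m ∨ 2*m + 60 ≤ 6*s) ∧
  (6*s + 60 ≤ 3*m ∨ 3*m + 60 ≤ 6*s) ∧
  (6*s + 60 ≤ 4*m ∨ 4*m + 60 ≤ 6*s) ∧
  (6*s + 60 ≤ 5*m ∨ 5*m + 60 ≤ 6*s)

instance (m s : ℤ) : Decidable (GoodP m s) := by unfold GoodP; infer_instance

lemma cvF_bounds (m s : ℤ) : -2 ≤ cvF m s ∧ cvF m s ≤ 5 := by
  unfold cvF; split_ifs <;> omega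

lemma core (m s s' μ : ℤ) (hm : 200 ≤ m) (hμ : μ = -1 ∨ μ = 0 ∨ μ = 1)
    (hs0 : 0 ≤ s) (hs1 : s < m) (hs0' : 0 ≤ s') (hs1' : s' < m) (hg : GoodP m s)
    (hdvd : m ∣ (Ff m s' + μ*s') - (Ff m s + μ*s)) : s' = s := by
  obtain ⟨j, hj⟩ := hdvd
  unfold GoodP at hg
  have hb := cvF_bounds m s
  have hb' := cvF_bounds m s'
  unfold Ff at hj
  rcases hμ with rfl | rfl | rfl <;>
  · have e1 : m * j ≤ 3*m + 20 := by omega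
    have e2 : -(3*m) - 20 ≤ m * j := by omega
    have j1 : j ≤ 3 := by
      by_contra hcon; push_neg at hcon
      have h4 : m*4 ≤ m*j := mul_le_mul_of_nonneg_left (by omega) (by omega)
      omega
    have j2 : -3 ≤ j := by
      by_contra hcon; push_neg at hcon
      have h4 : m*j ≤ m*(-4) := mul_le_mul_of_nonneg_left (by omega) (by omega)
      omega
    interval_cases j <;>
    · unfold cvF at hj
      split_ifs at hj <;> omega

-- ### box
noncomputable def boxS (m N : ℤ) : Finset (ℤ × ℤ) :=
  ((Finset.Ico 0 N) ×ˢ (Finset.Ico 0 N)).filter (fun p => ¬ (m ∣ p.1 - Ff m (p.2 % m)))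

lemma mem_boxS {m N : ℤ} {p : ℤ × ℤ} :
    p ∈ boxS m N ↔ (0 ≤ p.1 ∧ p.1 < N) ∧ (0 ≤ p.2 ∧ p.2 < N) ∧ ¬ (m ∣ p.1 - Ff m (p.2 % m)) := by
  simp [boxS, Finset.mem_filter, Finset.mem_product, Finset.mem_Ico, and_assoc]

lemma not_dvd_small {m w : ℤ} (h1 : 0 < w) (h2 : w < m) : ¬ m ∣ w :=
  fun h => absurd (Int.le_of_dvd h1 h) (by omega)

lemma no_mul_in_Ioo {m w q : ℤ} (hm : 0 < m) (h : m * q = w) (h1 : 0 < w) (h2 : w < m) : False := by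
  rcases le_or_gt q 0 with h' | h'
  · nlinarith
  · nlinarith

lemma emod_small_add {m s v : ℤ} (h0 : 0 ≤ s) (h1 : s < m) : (s + m*v) % m = s := by
  rw [Int.add_mul_emod_self_left]; exact Int.emod_eq_of_lt h0 h1

lemma emod_facts (m a : ℤ) (hm : 0 < m) :
    0 ≤ a % m ∧ a % m < m ∧ m * (a / m) = a - a % m := by
  refine ⟨Int.emod_nonneg a (by omega), Int.emod_lt_of_pos a hm, by rw [Int.emod_def]; ring⟩

lemma Ff_bounds {m s : ℤ} (h0 : 0 ≤ s) (h1 : s < m) : 2*s - 2 ≤ Ff m s ∧ Ff m s ≤ 2*s + 5 := by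
  have := cvF_bounds m s; unfold Ff; omega

section construction
variable {k : ℕ} {m T : ℤ}

-- the four directions, with mode μ:
-- row (1,0) : no core needed ; col (0,1) : μ = 0 ; diag+ (1,1) : μ = -1 ; diag- (1,-1) : μ = 1

lemma isStart_col (hm : 200 ≤ m) (hk : (k:ℤ) = m - 1) (hT : 1 ≤ T)
    {s u v : ℤ} (hs0 : 0 ≤ s) (hs1 : s < m) (hg : GoodP m s)
    (hu : 1 ≤ u ∧ u ≤ T) (hv : 1 ≤ v ∧ v ≤ T) :
    IsPatternStart (boxS m (m*(T+4))) k (0,1) (Ff m s + m*u, s + m*v + 1) := by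
  have hm0 : (0:ℤ) < m := by omega
  have hmuT : m*u ≤ m*T := mul_le_mul_of_nonneg_left hu.2 (by omega)
  have hmu1 : m*1 ≤ m*u := mul_le_mul_of_nonneg_left hu.1 (by omega)
  have hmvT : m*v ≤ m*T := mul_le_mul_of_nonneg_left hv.2 (by omega)
  have hmv1 : m*1 ≤ m*v := mul_le_mul_of_nonneg_left hv.1 (by omega)
  have hN : m*(T+4) = m*T + m*4 := by ring
  have hFb := Ff_bounds hs0 hs1
  refine ⟨?_, ?_, ?_⟩
  · intro t ht
    have ht' : (t:ℤ) < m - 1 := by omega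
    have ht0 : (0:ℤ) ≤ t := Int.natCast_nonneg t
    rw [mem_boxS]
    have hy : (Ff m s + m*u, s + m*v + 1) + (t:ℤ) • ((0:ℤ),(1:ℤ))
        = (Ff m s + m*u, s + m*v + 1 + t) := by
      simp [Prod.ext_iff, smul_eq_mul]
    rw [hy]
    refine ⟨⟨by omega, by omega⟩, ⟨by omega, by omega⟩, ?_⟩
    -- key: not in B
    set s₂ := (s + m*v + 1 + (t:ℤ)) % m with hs₂
    have hef := emod_facts m (s + m*v + 1 + t) hm0
    intro hdvd
    -- m ∣ Ff m s + m*u - Ff m s₂  →  m ∣ (Ff m s₂ + 0*s₂) - (Ff m s + 0*s)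
    have hdvd2 : m ∣ (Ff m s₂ + 0*s₂) - (Ff m s + 0*s) := by
      have h1 : m ∣ (Ff m s + m*u - Ff m s₂) := hdvd
      have h2 : m ∣ m*u := Dvd.intro _ rfl
      have h3 := dvd_sub h2 h1
      have h4 : m*u - (Ff m s + m*u - Ff m s₂) = (Ff m s₂ + 0*s₂) - (Ff m s + 0*s) := by ring
      rwa [h4] at h3
    have hcore := core m s s₂ 0 hm (by right; left; rfl) hs0 hs1 hef.1 hef.2.1 hg hdvd2
    -- s₂ = s forces m ∣ 1 + t with 0 < 1+t < m : contradiction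
    have h3 : m * ((s + m*v + 1 + (t:ℤ))/m - v) = 1 + t := by rw [mul_sub]; omega
    exact no_mul_in_Ioo hm0 h3 (by omega) (by omega)
  · rw [mem_boxS]
    intro hmem
    apply hmem.2.2
    have hy : (Ff m s + m*u, s + m*v + 1) - ((0:ℤ),(1:ℤ)) = (Ff m s + m*u, s + m*v) := by
      simp [Prod.ext_iff]
    rw [hy] at hmem ⊢
    simp only []
    rw [emod_small_add hs0 hs1]
    simpa using (Dvd.intro u rfl : m ∣ m*u)
  · rw [mem_boxS]
    intro hmem
    apply hmem.2.2
    have hy : (Ff m s + m*u, s + m*v + 1) + (k:ℤ) • ((0:ℤ),(1:ℤ))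
        = (Ff m s + m*u, s + m*(v+1)) := by
      rw [Prod.ext_iff]; constructor <;> simp [smul_eq_mul] <;> ring_nf <;> omega
    rw [hy] at hmem ⊢
    simp only []
    rw [emod_small_add hs0 hs1]
    simpa using (Dvd.intro u rfl : m ∣ m*u)

lemma isStart_row (hm : 200 ≤ m) (hk : (k:ℤ) = m - 1) (hT : 1 ≤ T)
    {s u v : ℤ} (hs0 : 0 ≤ s) (hs1 : s < m)
    (hu : 1 ≤ u ∧ u ≤ T) (hv : 1 ≤ v ∧ v ≤ T) :
    IsPatternStart (boxS m (m*(T+4))) k (1,0) (Ff m s + m*u + 1, s + m*v) := by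
  have hm0 : (0:ℤ) < m := by omega
  have hmuT : m*u ≤ m*T := mul_le_mul_of_nonneg_left hu.2 (by omega)
  have hmu1 : m*1 ≤ m*u := mul_le_mul_of_nonneg_left hu.1 (by omega)
  have hmvT : m*v ≤ m*T := mul_le_mul_of_nonneg_left hv.2 (by omega)
  have hmv1 : m*1 ≤ m*v := mul_le_mul_of_nonneg_left hv.1 (by omega)
  have hN : m*(T+4) = m*T + m*4 := by ring
  have hFb := Ff_bounds hs0 hs1
  refine ⟨?_, ?_, ?_⟩
  · intro t ht
    have ht' : (t:ℤ) < m - 1 := by omega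
    have ht0 : (0:ℤ) ≤ t := Int.natCast_nonneg t
    rw [mem_boxS]
    have hy : (Ff m s + m*u + 1, s + m*v) + (t:ℤ) • ((1:ℤ),(0:ℤ))
        = (Ff m s + m*u + 1 + t, s + m*v) := by
      rw [Prod.ext_iff]; constructor <;> simp [smul_eq_mul]
    rw [hy]
    refine ⟨⟨by omega, by omega⟩, ⟨by omega, by omega⟩, ?_⟩
    rw [emod_small_add hs0 hs1]
    intro hdvd
    have h2 : m ∣ m*u := Dvd.intro _ rfl
    have h3 := dvd_sub hdvd h2
    have h4 : (Ff m s + m*u + 1 + t - Ff m s) - m*u = 1 + t := by ring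
    rw [h4] at h3
    exact not_dvd_small (by omega) (by omega) h3
  · rw [mem_boxS]
    intro hmem
    apply hmem.2.2
    have hy : (Ff m s + m*u + 1, s + m*v) - ((1:ℤ),(0:ℤ)) = (Ff m s + m*u, s + m*v) := by
      rw [Prod.ext_iff]; constructor <;> simp
    rw [hy] at hmem ⊢
    simp only []
    rw [emod_small_add hs0 hs1]
    simpa using (Dvd.intro u rfl : m ∣ m*u)
  · rw [mem_boxS]
    intro hmem
    apply hmem.2.2
    have hy : (Ff m s + m*u + 1, s + m*v) + (k:ℤ) • ((1:ℤ),(0:ℤ))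
        = (Ff m s + m*(u+1), s + m*v) := by
      rw [Prod.ext_iff]; constructor <;> simp [smul_eq_mul] <;> ring_nf <;> omega
    rw [hy] at hmem ⊢
    simp only []
    rw [emod_small_add hs0 hs1]
    simpa using (Dvd.intro (u+1) rfl : m ∣ m*(u+1))

lemma isStart_dp (hm : 200 ≤ m) (hk : (k:ℤ) = m - 1) (hT : 1 ≤ T)
    {s u v : ℤ} (hs0 : 0 ≤ s) (hs1 : s < m) (hg : GoodP m s)
    (hu : 1 ≤ u ∧ u ≤ T) (hv : 1 ≤ v ∧ v ≤ T) :
    IsPatternStart (boxS m (m*(T+4))) k (1,1) (Ff m s + m*u + 1, s + m*v + 1) := by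
  have hm0 : (0:ℤ) < m := by omega
  have hmuT : m*u ≤ m*T := mul_le_mul_of_nonneg_left hu.2 (by omega)
  have hmu1 : m*1 ≤ m*u := mul_le_mul_of_nonneg_left hu.1 (by omega)
  have hmvT : m*v ≤ m*T := mul_le_mul_of_nonneg_left hv.2 (by omega)
  have hmv1 : m*1 ≤ m*v := mul_le_mul_of_nonneg_left hv.1 (by omega)
  have hN : m*(T+4) = m*T + m*4 := by ring
  have hFb := Ff_bounds hs0 hs1
  refine ⟨?_, ?_, ?_⟩
  · intro t ht
    have ht' : (t:ℤ) < m - 1 := by omega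
    have ht0 : (0:ℤ) ≤ t := Int.natCast_nonneg t
    rw [mem_boxS]
    have hy : (Ff m s + m*u + 1, s + m*v + 1) + (t:ℤ) • ((1:ℤ),(1:ℤ))
        = (Ff m s + m*u + 1 + t, s + m*v + 1 + t) := by
      rw [Prod.ext_iff]; constructor <;> simp [smul_eq_mul]
    rw [hy]
    refine ⟨⟨by omega, by omega⟩, ⟨by omega, by omega⟩, ?_⟩
    set s₂ := (s + m*v + 1 + (t:ℤ)) % m with hs₂
    have hef := emod_facts m (s + m*v + 1 + t) hm0
    intro hdvd
    have hdvd2 : m ∣ (Ff m s₂ + (-1)*s₂) - (Ff m s + (-1)*s) := by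
      have h2 : m ∣ m*u - m*v + m*((s + m*v + 1 + (t:ℤ))/m) := ⟨u - v + (s + m*v + 1 + (t:ℤ))/m, by ring⟩
      have h3 := dvd_sub h2 hdvd
      have h4 : (m*u - m*v + m*((s + m*v + 1 + (t:ℤ))/m)) - (Ff m s + m*u + 1 + t - Ff m s₂)
          = (Ff m s₂ + (-1)*s₂) - (Ff m s + (-1)*s) := by
        have hq := hef.2.2; omega
      rwa [h4] at h3
    have hcore := core m s s₂ (-1) hm (by left; rfl) hs0 hs1 hef.1 hef.2.1 hg hdvd2
    have h3 : m * ((s + m*v + 1 + (t:ℤ))/m - v) = 1 + t := by rw [mul_sub]; omega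
    exact no_mul_in_Ioo hm0 h3 (by omega) (by omega)
  · rw [mem_boxS]
    intro hmem
    apply hmem.2.2
    have hy : (Ff m s + m*u + 1, s + m*v + 1) - ((1:ℤ),(1:ℤ)) = (Ff m s + m*u, s + m*v) := by
      rw [Prod.ext_iff]; constructor <;> simp
    rw [hy] at hmem ⊢
    simp only []
    rw [emod_small_add hs0 hs1]
    simpa using (Dvd.intro u rfl : m ∣ m*u)
  · rw [mem_boxS]
    intro hmem
    apply hmem.2.2
    have hy : (Ff m s + m*u + 1, s + m*v + 1) + (k:ℤ) • ((1:ℤ),(1:ℤ))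
        = (Ff m s + m*(u+1), s + m*(v+1)) := by
      rw [Prod.ext_iff]; constructor <;> simp [smul_eq_mul] <;> ring_nf <;> omega
    rw [hy] at hmem ⊢
    simp only []
    rw [emod_small_add hs0 hs1]
    simpa using (Dvd.intro (u+1) rfl : m ∣ m*(u+1))

lemma isStart_dm (hm : 200 ≤ m) (hk : (k:ℤ) = m - 1) (hT : 1 ≤ T)
    {s u v : ℤ} (hs0 : 0 ≤ s) (hs1 : s < m) (hg : GoodP m s)
    (hu : 1 ≤ u ∧ u ≤ T) (hv : 1 ≤ v ∧ v ≤ T) :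
    IsPatternStart (boxS m (m*(T+4))) k (1,-1) (Ff m s + m*u + 1, s + m*v - 1) := by
  have hm0 : (0:ℤ) < m := by omega
  have hmuT : m*u ≤ m*T := mul_le_mul_of_nonneg_left hu.2 (by omega)
  have hmu1 : m*1 ≤ m*u := mul_le_mul_of_nonneg_left hu.1 (by omega)
  have hmvT : m*v ≤ m*T := mul_le_mul_of_nonneg_left hv.2 (by omega)
  have hmv1 : m*1 ≤ m*v := mul_le_mul_of_nonneg_left hv.1 (by omega)
  have hN : m*(T+4) = m*T + m*4 := by ring
  have hFb := Ff_bounds hs0 hs1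
  refine ⟨?_, ?_, ?_⟩
  · intro t ht
    have ht' : (t:ℤ) < m - 1 := by omega
    have ht0 : (0:ℤ) ≤ t := Int.natCast_nonneg t
    rw [mem_boxS]
    have hy : (Ff m s + m*u + 1, s + m*v - 1) + (t:ℤ) • ((1:ℤ),(-1:ℤ))
        = (Ff m s + m*u + 1 + t, s + m*v - 1 - t) := by
      rw [Prod.ext_iff]; constructor <;> simp [smul_eq_mul] <;> ring
    rw [hy]
    refine ⟨⟨by omega, by omega⟩, ⟨by omega, by omega⟩, ?_⟩
    set s₂ := (s + m*v - 1 - (t:ℤ)) % m with hs₂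
    have hef := emod_facts m (s + m*v - 1 - t) hm0
    intro hdvd
    have hdvd2 : m ∣ (Ff m s₂ + 1*s₂) - (Ff m s + 1*s) := by
      have h2 : m ∣ m*u + m*v - m*((s + m*v - 1 - (t:ℤ))/m) := ⟨u + v - (s + m*v - 1 - (t:ℤ))/m, by ring⟩
      have h3 := dvd_sub h2 hdvd
      have h4 : (m*u + m*v - m*((s + m*v - 1 - (t:ℤ))/m)) - (Ff m s + m*u + 1 + t - Ff m s₂)
          = (Ff m s₂ + 1*s₂) - (Ff m s + 1*s) := by
        have hq := hef.2.2; omega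
      rwa [h4] at h3
    have hcore := core m s s₂ 1 hm (by right; right; rfl) hs0 hs1 hef.1 hef.2.1 hg hdvd2
    have h3 : m * (v - (s + m*v - 1 - (t:ℤ))/m) = 1 + t := by rw [mul_sub]; omega
    exact no_mul_in_Ioo hm0 h3 (by omega) (by omega)
  · rw [mem_boxS]
    intro hmem
    apply hmem.2.2
    have hy : (Ff m s + m*u + 1, s + m*v - 1) - ((1:ℤ),(-1:ℤ)) = (Ff m s + m*u, s + m*v) := by
      rw [Prod.ext_iff]; constructor <;> simp
    rw [hy] at hmem ⊢
    simp only []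
    rw [emod_small_add hs0 hs1]
    simpa using (Dvd.intro u rfl : m ∣ m*u)
  · rw [mem_boxS]
    intro hmem
    apply hmem.2.2
    have hy : (Ff m s + m*u + 1, s + m*v - 1) + (k:ℤ) • ((1:ℤ),(-1:ℤ))
        = (Ff m s + m*(u+1), s + m*(v-1)) := by
      rw [Prod.ext_iff]; constructor <;> simp [smul_eq_mul] <;> ring_nf <;> omega
    rw [hy] at hmem ⊢
    simp only []
    rw [emod_small_add hs0 hs1]
    simpa using (Dvd.intro (u+1) rfl : m ∣ m*(u+1))

end construction

-- ### counting
noncomputable def GoodF (m : ℤ) : Finset ℤ := (Finset.Ico 0 m).filter (GoodP m)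

lemma goodF_card {m : ℤ} (hm : 200 ≤ m) : m.toNat ≤ (GoodF m).card + 147 := by
  classical
  unfold GoodF
  have hsplit := Finset.card_filter_add_card_filter_not
    (s := Finset.Ico (0:ℤ) m) (p := GoodP m)
  have hIco : (Finset.Ico (0:ℤ) m).card = m.toNat := by
    rw [Int.card_Ico]; omega
  have hbad : ((Finset.Ico (0:ℤ) m).filter (fun s => ¬ GoodP m s)).card ≤ 147 := by
    have hsub : (Finset.Ico (0:ℤ) m).filter (fun s => ¬ GoodP m s) ⊆
        (Finset.Ico (0:ℤ) 10) ∪ (Finset.Ico ((m-60)/6) ((m-60)/6+21))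
        ∪ (Finset.Ico ((2*m-60)/6) ((2*m-60)/6+21)) ∪ (Finset.Ico ((3*m-60)/6) ((3*m-60)/6+21))
        ∪ (Finset.Ico ((4*m-60)/6) ((4*m-60)/6+21)) ∪ (Finset.Ico ((5*m-60)/6) ((5*m-60)/6+21))
        ∪ (Finset.Ico (m-10) m) := by
      intro s hs
      simp only [Finset.mem_filter, Finset.mem_Ico] at hs
      obtain ⟨⟨h1, h2⟩, hng⟩ := hs
      unfold GoodP at hng
      simp only [Finset.mem_union, Finset.mem_Ico]
      omega
    calc ((Finset.Ico (0:ℤ) m).filter (fun s => ¬ GoodP m s)).card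
        ≤ _ := Finset.card_le_card hsub
      _ ≤ 147 := by
        refine le_trans (Finset.card_union_le _ _) ?_
        have h21 : ∀ a : ℤ, (Finset.Ico a (a+21)).card = 21 := by
          intro a; rw [Int.card_Ico]; omega
        have h10 : (Finset.Ico (0:ℤ) 10).card = 10 := by rw [Int.card_Ico]; rfl
        have hlast : (Finset.Ico (m-10) m).card = 10 := by rw [Int.card_Ico]; omega
        refine le_trans (add_le_add_left (Finset.card_union_le _ _) _) ?_
        refine le_trans (add_le_add_left (add_le_add_left (Finset.card_union_le _ _) _) _) ?_
        refine le_trans (add_le_add_left (add_le_add_left (add_le_add_left (Finset.card_union_le _ _) _) _) _) ?_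
        refine le_trans (add_le_add_left (add_le_add_left (add_le_add_left (add_le_add_left (Finset.card_union_le _ _) _) _) _) _) ?_
        refine le_trans (add_le_add_left (add_le_add_left (add_le_add_left (add_le_add_left (add_le_add_left (Finset.card_union_le _ _) _) _) _) _) _) ?_
        rw [h21, h21, h21, h21, h21, h10, hlast]
        norm_num
  omega

lemma mem_goodF {m s : ℤ} : s ∈ GoodF m ↔ (0 ≤ s ∧ s < m) ∧ GoodP m s := by
  simp [GoodF, Finset.mem_filter, Finset.mem_Ico, and_assoc]

noncomputable def IdxF (m T : ℤ) : Finset (ℤ × ℤ × ℤ) := (GoodF m) ×ˢ ((Finset.Icc 1 T) ×ˢ (Finset.Icc 1 T))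

lemma mem_idxF {m T : ℤ} {x : ℤ × ℤ × ℤ} : x ∈ IdxF m T ↔
    ((0 ≤ x.1 ∧ x.1 < m) ∧ GoodP m x.1) ∧ (1 ≤ x.2.1 ∧ x.2.1 ≤ T) ∧ (1 ≤ x.2.2 ∧ x.2.2 ≤ T) := by
  simp [IdxF, Finset.mem_product, mem_goodF, Finset.mem_Icc]

lemma idxF_card {m T : ℤ} (hT : 0 ≤ T) : (IdxF m T).card = (GoodF m).card * T.toNat * T.toNat := by
  simp only [IdxF, Finset.card_product, Int.card_Icc]
  have h1 : (T + 1 - 1).toNat = T.toNat := by omega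
  rw [h1]; ring

lemma split_decomp {m : ℤ} (hm : 0 < m) {s s' a b : ℤ}
    (hs0 : 0 ≤ s) (hs1 : s < m) (hs0' : 0 ≤ s') (hs1' : s' < m)
    (h : s + m*a = s' + m*b) : s = s' ∧ a = b := by
  have h1 : s = s' := by
    have e1 : (s + m*a) % m = s := emod_small_add hs0 hs1
    have e2 : (s' + m*b) % m = s' := emod_small_add hs0' hs1'
    rw [h, e2] at e1; omega
  refine ⟨h1, ?_⟩
  have h2 : m*a = m*b := by omega
  exact mul_left_cancel₀ (by omega) h2

-- ### pattern set
lemma patternSet_sub (S : Finset (ℤ×ℤ)) (k : ℕ) (hk : 1 ≤ k) :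
    {dp : (ℤ×ℤ)×(ℤ×ℤ) | dp.1 ∈ Dirs ∧ IsPatternStart S k dp.1 dp.2} ⊆ ↑(Dirs ×ˢ S) := by
  rintro ⟨d, p⟩ ⟨hd, hp⟩
  have h0 := hp.1 0 hk
  simp only [Nat.cast_zero, zero_smul, add_zero] at h0
  simp only [Finset.coe_product, Set.mem_prod, Finset.mem_coe]
  exact ⟨hd, h0⟩

lemma patternSet_finite (S : Finset (ℤ×ℤ)) (k : ℕ) (hk : 1 ≤ k) :
    {dp : (ℤ×ℤ)×(ℤ×ℤ) | dp.1 ∈ Dirs ∧ IsPatternStart S k dp.1 dp.2}.Finite :=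
  Set.Finite.subset (Dirs ×ˢ S).finite_toSet (patternSet_sub S k hk)

def phiR (m : ℤ) (x : ℤ×ℤ×ℤ) : (ℤ×ℤ)×(ℤ×ℤ) := ((1,0), (Ff m x.1 + m*x.2.1 + 1, x.1 + m*x.2.2))
def phiC (m : ℤ) (x : ℤ×ℤ×ℤ) : (ℤ×ℤ)×(ℤ×ℤ) := ((0,1), (Ff m x.1 + m*x.2.1, x.1 + m*x.2.2 + 1))
def phiP (m : ℤ) (x : ℤ×ℤ×ℤ) : (ℤ×ℤ)×(ℤ×ℤ) := ((1,1), (Ff m x.1 + m*x.2.1 + 1, x.1 + m*x.2.2 + 1))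
def phiM (m : ℤ) (x : ℤ×ℤ×ℤ) : (ℤ×ℤ)×(ℤ×ℤ) := ((1,-1), (Ff m x.1 + m*x.2.1 + 1, x.1 + m*x.2.2 - 1))

-- ### the master construction lemma
lemma build (k T : ℕ) (hk : 200 ≤ k) (hT : 1 ≤ T) :
    ∃ S : Finset (ℤ × ℤ),
      S.card ≤ (k+1) * (T+4) * ((k+1) * (T+4)) ∧
      4 * ((k+1) - 147) * (T * T) ≤ patternCount S k := by
  have hm : (200:ℤ) ≤ (k:ℤ)+1 := by exact_mod_cast by omega
  have hkm : (k:ℤ) = ((k:ℤ)+1) - 1 := by ring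
  have hTz : (1:ℤ) ≤ (T:ℤ) := by exact_mod_cast hT
  set m : ℤ := (k:ℤ)+1 with hmdef
  set Tz : ℤ := (T:ℤ) with hTdef
  set N : ℤ := m*(Tz+4) with hNdef
  refine ⟨boxS m N, ?_, ?_⟩
  · have h1 : (boxS m N).card ≤ ((Finset.Ico 0 N) ×ˢ (Finset.Ico 0 N)).card :=
      Finset.card_filter_le _ _
    have h2 : ((Finset.Ico 0 N) ×ˢ (Finset.Ico 0 N)).card = N.toNat * N.toNat := by
      simp [Finset.card_product, Int.card_Ico]
    have h3 : N.toNat = (k+1)*(T+4) := by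
      have : N = (((k+1)*(T+4) : ℕ) : ℤ) := by rw [hNdef, hmdef, hTdef]; push_cast; ring
      rw [this, Int.toNat_natCast]
    rw [h2, h3] at h1
    exact h1
  · -- the injection
    classical
    have hm0 : (0:ℤ) < m := by omega
    have key : ∀ φ : ℤ×ℤ×ℤ → (ℤ×ℤ)×(ℤ×ℤ), ∀ c₁ c₂ : ℤ,
        (∀ x, φ x = ((c₁,c₂), (Ff m x.1 + m*x.2.1 + c₁, x.1 + m*x.2.2 + c₂))) →
        Set.InjOn φ (IdxF m Tz) := by
      intro φ c₁ c₂ hdef a ha b hb heq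
      simp only [Finset.mem_coe] at ha hb
      rw [mem_idxF] at ha hb
      rw [hdef a, hdef b] at heq
      simp only [Prod.ext_iff] at heq
      obtain ⟨-, h1, h2⟩ := heq
      have h2' : a.1 + m*a.2.2 = b.1 + m*b.2.2 := by omega
      obtain ⟨e1, e2⟩ := split_decomp hm0 ha.1.1.1 ha.1.1.2 hb.1.1.1 hb.1.1.2 h2'
      have h1' : m*a.2.1 = m*b.2.1 := by rw [e1] at h1; omega
      have e3 : a.2.1 = b.2.1 := mul_left_cancel₀ (by omega) h1'
      exact Prod.ext e1 (Prod.ext e3 e2)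
    have hinjr : Set.InjOn (phiR m) (IdxF m Tz) := key _ 1 0 (fun x => by simp [phiR])
    have hinjc : Set.InjOn (phiC m) (IdxF m Tz) := key _ 0 1 (fun x => by simp [phiC])
    have hinjp : Set.InjOn (phiP m) (IdxF m Tz) := key _ 1 1 (fun x => by simp [phiP])
    have hinjm : Set.InjOn (phiM m) (IdxF m Tz) := key _ 1 (-1) (fun x => by simp [phiM, sub_eq_add_neg])
    set Pr := (IdxF m Tz).image (phiR m) with hPr
    set Pc := (IdxF m Tz).image (phiC m) with hPc
    set Pp := (IdxF m Tz).image (phiP m) with hPp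
    set Pm := (IdxF m Tz).image (phiM m) with hPm
    have hcr : Pr.card = (IdxF m Tz).card := Finset.card_image_of_injOn hinjr
    have hcc : Pc.card = (IdxF m Tz).card := Finset.card_image_of_injOn hinjc
    have hcp : Pp.card = (IdxF m Tz).card := Finset.card_image_of_injOn hinjp
    have hcm : Pm.card = (IdxF m Tz).card := Finset.card_image_of_injOn hinjm
    -- first components
    have hfr : ∀ x ∈ Pr, x.1 = ((1:ℤ),(0:ℤ)) := by
      intro x hx; rw [hPr, Finset.mem_image] at hx; obtain ⟨a, -, rfl⟩ := hx; simp [phiR]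
    have hfc : ∀ x ∈ Pc, x.1 = ((0:ℤ),(1:ℤ)) := by
      intro x hx; rw [hPc, Finset.mem_image] at hx; obtain ⟨a, -, rfl⟩ := hx; simp [phiC]
    have hfp : ∀ x ∈ Pp, x.1 = ((1:ℤ),(1:ℤ)) := by
      intro x hx; rw [hPp, Finset.mem_image] at hx; obtain ⟨a, -, rfl⟩ := hx; simp [phiP]
    have hfm : ∀ x ∈ Pm, x.1 = ((1:ℤ),(-1:ℤ)) := by
      intro x hx; rw [hPm, Finset.mem_image] at hx; obtain ⟨a, -, rfl⟩ := hx; simp [phiM]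
    have hd1 : Disjoint Pr Pc := by
      rw [Finset.disjoint_left]; intro x h1 h2
      have e1 := hfr x h1; have e2 := hfc x h2; rw [e1] at e2
      exact absurd (congrArg Prod.fst e2) (by norm_num)
    have hd2 : Disjoint (Pr ∪ Pc) Pp := by
      rw [Finset.disjoint_left]; intro x h1 h2
      have e2 := hfp x h2
      rcases Finset.mem_union.mp h1 with h | h
      · have e1 := hfr x h; rw [e1] at e2
        exact absurd (congrArg Prod.snd e2) (by norm_num)
      · have e1 := hfc x h; rw [e1] at e2
        exact absurd (congrArg Prod.fst e2) (by norm_num)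
    have hd3 : Disjoint (Pr ∪ Pc ∪ Pp) Pm := by
      rw [Finset.disjoint_left]; intro x h1 h2
      have e2 := hfm x h2
      rcases Finset.mem_union.mp h1 with h | h
      · rcases Finset.mem_union.mp h with h' | h'
        · have e1 := hfr x h'; rw [e1] at e2
          exact absurd (congrArg Prod.snd e2) (by norm_num)
        · have e1 := hfc x h'; rw [e1] at e2
          exact absurd (congrArg Prod.fst e2) (by norm_num)
      · have e1 := hfp x h; rw [e1] at e2
        exact absurd (congrArg Prod.snd e2) (by norm_num)
    set P := Pr ∪ Pc ∪ Pp ∪ Pm with hP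
    have hcard : P.card = 4 * (IdxF m Tz).card := by
      rw [hP, Finset.card_union_of_disjoint hd3, Finset.card_union_of_disjoint hd2,
        Finset.card_union_of_disjoint hd1, hcr, hcc, hcp, hcm]; ring
    -- P is a set of pattern starts
    have hk1 : 1 ≤ k := by omega
    have hsub : ↑P ⊆ {dp : (ℤ×ℤ)×(ℤ×ℤ) | dp.1 ∈ Dirs ∧ IsPatternStart (boxS m N) k dp.1 dp.2} := by
      intro x hx
      rw [Finset.mem_coe, hP] at hx
      simp only [Finset.mem_union] at hx
      have hmem : ∀ a : ℤ×ℤ×ℤ, a ∈ IdxF m Tz →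
          ((0 ≤ a.1 ∧ a.1 < m) ∧ GoodP m a.1) ∧ (1 ≤ a.2.1 ∧ a.2.1 ≤ Tz) ∧ (1 ≤ a.2.2 ∧ a.2.2 ≤ Tz) :=
        fun a ha => mem_idxF.mp ha
      rcases hx with ((hx | hx) | hx) | hx <;>
        [ (rw [hPr, Finset.mem_image] at hx; obtain ⟨a, ha, rfl⟩ := hx;
           obtain ⟨⟨hs, hg⟩, hu, hv⟩ := hmem a ha;
           exact ⟨by simp [Dirs, phiR, Prod.ext_iff], isStart_row hm (by omega) hTz hs.1 hs.2 hu hv⟩);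
          (rw [hPc, Finset.mem_image] at hx; obtain ⟨a, ha, rfl⟩ := hx;
           obtain ⟨⟨hs, hg⟩, hu, hv⟩ := hmem a ha;
           exact ⟨by simp [Dirs, phiC, Prod.ext_iff], isStart_col hm (by omega) hTz hs.1 hs.2 hg hu hv⟩);
          (rw [hPp, Finset.mem_image] at hx; obtain ⟨a, ha, rfl⟩ := hx;
           obtain ⟨⟨hs, hg⟩, hu, hv⟩ := hmem a ha;
           exact ⟨by simp [Dirs, phiP, Prod.ext_iff], isStart_dp hm (by omega) hTz hs.1 hs.2 hg hu hv⟩);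
          (rw [hPm, Finset.mem_image] at hx; obtain ⟨a, ha, rfl⟩ := hx;
           obtain ⟨⟨hs, hg⟩, hu, hv⟩ := hmem a ha;
           exact ⟨by simp [Dirs, phiM, Prod.ext_iff], isStart_dm hm (by omega) hTz hs.1 hs.2 hg hu hv⟩)]
    have hfin := patternSet_finite (boxS m N) k hk1
    have hle : P.card ≤ patternCount (boxS m N) k := by
      have := Set.ncard_le_ncard hsub hfin
      rwa [Set.ncard_coe_finset] at this
    -- arithmetic
    have hgc : (k+1) - 147 ≤ (GoodF m).card := by
      have := goodF_card (m := m) hm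
      have hmt : m.toNat = k + 1 := by omega
      omega
    have hidx : (IdxF m Tz).card = (GoodF m).card * T * T := by
      rw [idxF_card (by omega)]
      simp [hTdef]
    have : 4 * ((k+1) - 147) * (T*T) ≤ 4 * (IdxF m Tz).card := by
      rw [hidx]
      have := Nat.mul_le_mul_right (T*T) (Nat.mul_le_mul_left 4 hgc)
      calc 4 * ((k+1) - 147) * (T*T) = 4 * ((k+1)-147) * (T*T) := rfl
        _ ≤ 4 * (GoodF m).card * (T*T) := this
        _ = 4 * ((GoodF m).card * T * T) := by ring
    omega

-- ### part A : k * patternCount ≤ 4 * card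
lemma start_eq {S : Finset (ℤ×ℤ)} {k : ℕ} {d p p' : ℤ×ℤ}
    (h : IsPatternStart S k d p) (h' : IsPatternStart S k d p')
    {t t' : ℕ} (ht : t < k) (ht' : t' < k)
    (he : p + (t:ℤ) • d = p' + (t':ℤ) • d) : p = p' := by
  rcases lt_trichotomy t t' with hlt | heqt | hgt
  · exfalso
    have hmem := h.1 (k - (t' - t)) (by omega)
    apply h'.2.2
    have hc : ((k - (t' - t) : ℕ) : ℤ) = (k:ℤ) - t' + t := by
      push_cast [Nat.cast_sub (by omega : t' - t ≤ k), Nat.cast_sub (le_of_lt hlt)]; ring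
    rw [hc] at hmem
    have hkey : p + ((k:ℤ) - t' + t) • d = p' + (k:ℤ) • d := by
      have h1 : p.1 + (t:ℤ) * d.1 = p'.1 + (t':ℤ) * d.1 := congrArg Prod.fst he
      have h2 : p.2 + (t:ℤ) * d.2 = p'.2 + (t':ℤ) * d.2 := congrArg Prod.snd he
      rw [Prod.ext_iff]
      constructor <;> simp only [Prod.fst_add, Prod.snd_add, Prod.smul_fst, Prod.smul_snd,
        smul_eq_mul] <;> nlinarith [h1, h2]
    rwa [hkey] at hmem
  · rw [heqt] at he
    exact add_right_cancel he
  · exfalso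
    have hmem := h'.1 (k - (t - t')) (by omega)
    apply h.2.2
    have hc : ((k - (t - t') : ℕ) : ℤ) = (k:ℤ) - t + t' := by
      push_cast [Nat.cast_sub (by omega : t - t' ≤ k), Nat.cast_sub (le_of_lt hgt)]; ring
    rw [hc] at hmem
    have hkey : p' + ((k:ℤ) - t + t') • d = p + (k:ℤ) • d := by
      have h1 : p.1 + (t:ℤ) * d.1 = p'.1 + (t':ℤ) * d.1 := congrArg Prod.fst he
      have h2 : p.2 + (t:ℤ) * d.2 = p'.2 + (t':ℤ) * d.2 := congrArg Prod.snd he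
      rw [Prod.ext_iff]
      constructor <;> simp only [Prod.fst_add, Prod.snd_add, Prod.smul_fst, Prod.smul_snd,
        smul_eq_mul] <;> nlinarith [h1, h2]
    rwa [hkey] at hmem

lemma countA (S : Finset (ℤ×ℤ)) (k : ℕ) (hk : 1 ≤ k) :
    k * patternCount S k ≤ 4 * S.card := by
  classical
  have hfin := patternSet_finite S k hk
  have hpc : patternCount S k = hfin.toFinset.card := by
    rw [patternCount, Set.ncard_eq_toFinset_card _ hfin]
  set PF := hfin.toFinset with hPF
  have hmaps : ∀ x ∈ PF ×ˢ Finset.range k,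
      (x.1.1, x.1.2 + (x.2:ℤ) • x.1.1) ∈ Dirs ×ˢ S := by
    rintro ⟨⟨d, p⟩, t⟩ hx
    rw [Finset.mem_product] at hx ⊢
    obtain ⟨hdp, ht⟩ := hx
    rw [hPF, Set.Finite.mem_toFinset] at hdp
    rw [Finset.mem_range] at ht
    exact ⟨hdp.1, hdp.2.1 t ht⟩
  have hinj : Set.InjOn (fun x : ((ℤ×ℤ)×(ℤ×ℤ)) × ℕ => (x.1.1, x.1.2 + (x.2:ℤ) • x.1.1))
      ↑(PF ×ˢ Finset.range k) := by
    rintro ⟨⟨d, p⟩, t⟩ hx ⟨⟨d', p'⟩, t'⟩ hy heq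
    simp only [Finset.coe_product, Set.mem_prod, Finset.mem_coe, Finset.mem_range,
      Set.Finite.mem_toFinset, hPF] at hx hy
    have hd : d = d' := congrArg Prod.fst heq
    have hpe := congrArg Prod.snd heq
    simp only at hpe
    subst hd
    have hpp : p = p' := start_eq hx.1.2 hy.1.2 hx.2 hy.2 (by exact hpe)
    subst hpp
    have hdir := hx.1.1
    simp only [Dirs, Finset.mem_insert, Finset.mem_singleton] at hdir
    have h1 := congrArg Prod.fst hpe
    have h2 := congrArg Prod.snd hpe
    simp only [Prod.fst_add, Prod.snd_add, Prod.smul_fst, Prod.smul_snd, smul_eq_mul] at h1 h2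
    have htt : t = t' := by
      rcases hdir with rfl | rfl | rfl | rfl <;> simp at h1 h2 <;> omega
    rw [htt]
  have hcard := Finset.card_le_card_of_injOn _ hmaps hinj
  rw [Finset.card_product, Finset.card_product, Finset.card_range] at hcard
  have hdc : Dirs.card = 4 := by decide
  rw [hdc] at hcard
  rw [hpc]
  calc k * PF.card = PF.card * k := Nat.mul_comm _ _
    _ ≤ 4 * S.card := hcard


theorem stmt16 :
    ∀ ε : ℝ, 0 < ε → ∃ K : ℕ, ∀ k : ℕ, K ≤ k → ∀ L : ℝ,
      Tendsto (fun n : ℕ => (minPoints k n : ℝ) / n) atTop (nhds L) →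
      |L / k - 1 / 4| ≤ ε := by
  intro ε hε
  refine ⟨400 + ⌈38/ε⌉₊, ?_⟩
  intro k hK L hL
  have hk400 : 400 ≤ k := by omega
  have hk200 : 200 ≤ k := by omega
  have bld : ∀ T : ℕ, ∃ S : Finset (ℤ × ℤ),
      S.card ≤ (k+1) * ((T+1)+4) * ((k+1) * ((T+1)+4)) ∧
      4 * ((k+1) - 147) * ((T+1) * (T+1)) ≤ patternCount S k :=
    fun T => build k (T+1) hk200 (by omega)
  choose Sf h1 h2 using bld
  set nn : ℕ → ℕ := fun T => patternCount (Sf T) k with hnn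
  have hqlb : ∀ T, 4 * ((k+1) - 147) * ((T+1) * (T+1)) ≤ nn T := h2
  have hnlb : ∀ T, T + 1 ≤ nn T := by
    intro T
    refine le_trans ?_ (hqlb T)
    have e1 : T + 1 ≤ (T+1)*(T+1) := Nat.le_mul_of_pos_left _ (by omega)
    have e2 : (T+1)*(T+1) ≤ 4 * ((k+1) - 147) * ((T+1)*(T+1)) :=
      Nat.le_mul_of_pos_left _ (by omega)
    omega
  have hmin_le : ∀ T, minPoints k (nn T) ≤ (Sf T).card := by
    intro T
    exact Nat.sInf_le ⟨Sf T, rfl, rfl⟩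
  have hlb : ∀ T, k * nn T ≤ 4 * minPoints k (nn T) := by
    intro T
    have hne : {c | ∃ S : Finset (ℤ × ℤ), patternCount S k = nn T ∧ S.card = c}.Nonempty :=
      ⟨(Sf T).card, Sf T, rfl, rfl⟩
    have hmem := Nat.sInf_mem hne
    obtain ⟨S₀, hS₀1, hS₀2⟩ := hmem
    have := countA S₀ k (by omega)
    rw [hS₀1] at this
    rw [minPoints]
    rw [hS₀2] at this
    exact this
  have hmono : ∀ T : ℕ, (fun T : ℕ => T) T ≤ nn T := by
    intro T
    have h := hnlb T
    exact le_trans (Nat.le_succ T) h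
  have htends : Filter.Tendsto nn Filter.atTop Filter.atTop := by
    apply Filter.tendsto_atTop_mono hmono
    exact Filter.tendsto_id
  have hcomp : Filter.Tendsto (fun T : ℕ => (minPoints k (nn T) : ℝ) / (nn T))
      Filter.atTop (nhds L) := hL.comp htends
  have hkpos : (0:ℝ) < k := by positivity
  -- lower bound
  have hlow : ∀ T, (k:ℝ)/4 ≤ (minPoints k (nn T) : ℝ) / (nn T) := by
    intro T
    have hnpos : (0:ℝ) < (nn T : ℝ) := by
      have h := hnlb T
      have : 0 < nn T := by omega
      exact_mod_cast this
    rw [div_le_div_iff₀ (by norm_num) hnpos]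
    have := hlb T
    have hc : (k:ℝ) * (nn T : ℝ) ≤ 4 * (minPoints k (nn T) : ℝ) := by exact_mod_cast this
    linarith
  have hLlow : (k:ℝ)/4 ≤ L := ge_of_tendsto' hcomp hlow
  -- upper bound
  set R : ℝ := ((k:ℝ)+1)^2 / (4*((k:ℝ)-146)) with hR
  have hk146 : (0:ℝ) < (k:ℝ) - 146 := by
    have : (400:ℝ) ≤ (k:ℝ) := by exact_mod_cast hk400
    linarith
  set g : ℕ → ℝ := fun T => R * ((1 + 4/((T:ℝ)+1))^2) with hg
  have hup : ∀ T, (minPoints k (nn T) : ℝ) / (nn T) ≤ g T := by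
    intro T
    have hT1 : (0:ℝ) < (T:ℝ)+1 := by positivity
    have hnumpos : (0:ℝ) ≤ (((k:ℝ)+1) * ((T:ℝ)+5))^2 := sq_nonneg _
    have hdenpos : (0:ℝ) < 4*((k:ℝ)-146)*((T:ℝ)+1)^2 := by positivity
    have ha : (minPoints k (nn T) : ℝ) ≤ (((k:ℝ)+1) * ((T:ℝ)+5))^2 := by
      have := le_trans (hmin_le T) (le_refl _)
      have hcard := h1 T
      have : minPoints k (nn T) ≤ (k+1) * ((T+1)+4) * ((k+1) * ((T+1)+4)) :=
        le_trans (hmin_le T) hcard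
      have hc : (minPoints k (nn T) : ℝ) ≤ ((k:ℝ)+1) * ((T:ℝ)+5) * (((k:ℝ)+1) * ((T:ℝ)+5)) := by
        exact_mod_cast this
      nlinarith [hc]
    have hb : 4*((k:ℝ)-146)*((T:ℝ)+1)^2 ≤ (nn T : ℝ) := by
      have := hqlb T
      have hc : ((4 * ((k+1) - 147) * ((T+1) * (T+1)) : ℕ) : ℝ) ≤ (nn T : ℝ) := by
        exact_mod_cast this
      have he : ((4 * ((k+1) - 147) * ((T+1) * (T+1)) : ℕ) : ℝ)
          = 4*((k:ℝ)-146)*((T:ℝ)+1)^2 := by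
        have h147 : ((k+1) - 147 : ℕ) = k - 146 := by omega
        rw [h147]
        push_cast [Nat.cast_sub (by omega : 146 ≤ k)]
        ring
      rw [he] at hc
      exact hc
    have step1 : (minPoints k (nn T) : ℝ) / (nn T) ≤
        (((k:ℝ)+1) * ((T:ℝ)+5))^2 / (4*((k:ℝ)-146)*((T:ℝ)+1)^2) :=
      div_le_div₀ hnumpos ha hdenpos hb
    refine le_trans step1 (le_of_eq ?_)
    rw [hg, hR]
    field_simp
    ring
  have hgt : Filter.Tendsto g Filter.atTop (nhds R) := by
    have h0 : Filter.Tendsto (fun T : ℕ => 4/((T:ℝ)+1)) Filter.atTop (nhds 0) := by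
      have := tendsto_natCast_atTop_atTop (R := ℝ)
      have h1 : Filter.Tendsto (fun T : ℕ => (T:ℝ)+1) Filter.atTop Filter.atTop :=
        Filter.tendsto_atTop_add_const_right _ 1 this
      exact Filter.Tendsto.div_atTop tendsto_const_nhds h1
    have h1 : Filter.Tendsto (fun T : ℕ => (1 + 4/((T:ℝ)+1))^2) Filter.atTop (nhds 1) := by
      have := (tendsto_const_nhds (x := (1:ℝ)) (f := Filter.atTop (α := ℕ))).add h0
      simp only [add_zero] at this
      have hsq := this.mul this
      simpa [pow_two] using hsq
    have := h1.const_mul R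
    simpa using this
  have hLup : L ≤ R := le_of_tendsto_of_tendsto' hcomp hgt hup
  -- conclude
  have hLk_low : 1/4 ≤ L / k := by
    rw [le_div_iff₀ hkpos]
    linarith
  have h38 : 38 ≤ ε * ((k:ℝ) - 146) := by
    have hceil : (38:ℝ)/ε ≤ (⌈38/ε⌉₊ : ℝ) := Nat.le_ceil _
    have hkc : (400:ℝ) + (⌈38/ε⌉₊ : ℝ) ≤ (k:ℝ) := by exact_mod_cast hK
    have : (38:ℝ)/ε ≤ (k:ℝ) - 146 := by linarith
    calc (38:ℝ) = (38/ε) * ε := by field_simp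
      _ ≤ ((k:ℝ) - 146) * ε := by
          exact mul_le_mul_of_nonneg_right this (le_of_lt hε)
      _ = ε * ((k:ℝ) - 146) := by ring
  have hLk_up : L / k ≤ 1/4 + ε := by
    have hstep : R / k ≤ 1/4 + ε := by
      rw [hR, div_div, div_le_iff₀ (by positivity)]
      nlinarith [mul_le_mul_of_nonneg_right h38 (le_of_lt hkpos)]
    have : L / k ≤ R / k := (div_le_div_iff_of_pos_right hkpos).mpr hLup
    linarith
  rw [abs_le]
  constructor <;> linarith
end
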